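/- Let {φ(θ), θ ∈ T_0} be an admissible family of nonnegative random variables which is both right and left continuous along stopping times in expectation and satisfies E[ess sup_{θ ∈ T_0} φ(θ)] < ∞. Let v(S) = ess sup_{θ ∈ T_S} E[φ(θ) | F_S]. Then for every S ∈ T_0 the stopping time θ*(S) := ess inf {θ ∈ T_S : v(θ) = φ(θ) a.s.} is optimal for v(S), i.e. v(S) = E[φ(θ*(S)) | F_S] almost surely. -/

import Mathlib

open MeasureTheory Filter Set Topology

variable {Ω : Type*}

/-- `τ` belongs to `T_0`: it is a stopping time of `𝓕` with values in `[0, T]`. -/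
def MemT0 {m0 : MeasurableSpace Ω} (𝓕 : MeasureTheory.Filtration ℝ m0) (T : ℝ)
    (τ : Ω → ℝ) : Prop :=
  MeasureTheory.IsStoppingTime 𝓕 (fun ω => (τ ω : WithTop ℝ)) ∧ ∀ ω, τ ω ∈ Set.Icc (0 : ℝ) T

/-- `v` is an essential supremum of the family `f i`, `i` ranging over `{i | P i}`:
it dominates every member a.s. and is a.s. below any other a.s. upper bound. -/
def IsEssSupFam {m0 : MeasurableSpace Ω} (μ : MeasureTheory.Measure Ω) {ι : Sort*}
    (P : ι → Prop) (f : ι → Ω → ℝ) (v : Ω → ℝ) : Prop :=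
  (∀ i, P i → f i ≤ᵐ[μ] v) ∧ ∀ w : Ω → ℝ, (∀ i, P i → f i ≤ᵐ[μ] w) → v ≤ᵐ[μ] w

/-- `v` is an essential infimum of the family `f i`, `i` ranging over `{i | P i}`. -/
def IsEssInfFam {m0 : MeasurableSpace Ω} (μ : MeasureTheory.Measure Ω) {ι : Sort*}
    (P : ι → Prop) (f : ι → Ω → ℝ) (v : Ω → ℝ) : Prop :=
  (∀ i, P i → v ≤ᵐ[μ] f i) ∧ ∀ w : Ω → ℝ, (∀ i, P i → w ≤ᵐ[μ] f i) → w ≤ᵐ[μ] v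

/-- An admissible family of nonnegative random variables indexed by the stopping
times in `T_0`: `φ τ` is a nonnegative `F_τ`-measurable random variable, and
`φ τ = φ τ'` a.s. on `{τ = τ'}`. -/
def Admissible {m0 : MeasurableSpace Ω} (𝓕 : MeasureTheory.Filtration ℝ m0) (T : ℝ)
    (μ : MeasureTheory.Measure Ω) (φ : (Ω → ℝ) → Ω → ℝ) : Prop :=
  (∀ τ (hτ : MemT0 𝓕 T τ),
      Measurable[hτ.1.measurableSpace] (φ τ) ∧ ∀ ω, 0 ≤ φ τ ω) ∧
  ∀ τ τ', MemT0 𝓕 T τ → MemT0 𝓕 T τ' →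
    ∀ᵐ ω ∂μ, τ ω = τ' ω → φ τ ω = φ τ' ω

/-- An a.e. variant of admissibility (for families defined only up to a.s. equality,
such as value-function families): `φ τ` is a.s. nonnegative and a.s. equal to some
`F_τ`-measurable random variable, and `φ τ = φ τ'` a.s. on `{τ = τ'}`. -/
def AdmissibleAE {m0 : MeasurableSpace Ω} (𝓕 : MeasureTheory.Filtration ℝ m0) (T : ℝ)
    (μ : MeasureTheory.Measure Ω) (φ : (Ω → ℝ) → Ω → ℝ) : Prop :=
  (∀ τ (hτ : MemT0 𝓕 T τ),
      (∀ᵐ ω ∂μ, 0 ≤ φ τ ω) ∧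
      ∃ w : Ω → ℝ, Measurable[hτ.1.measurableSpace] w ∧ φ τ =ᵐ[μ] w) ∧
  ∀ τ τ', MemT0 𝓕 T τ → MemT0 𝓕 T τ' →
    ∀ᵐ ω ∂μ, τ ω = τ' ω → φ τ ω = φ τ' ω

/-- A biadmissible family: `ψ τ S` is a nonnegative `F_{τ ∨ S}`-measurable random
variable, and `ψ τ S = ψ τ' S'` a.s. on `{τ = τ'} ∩ {S = S'}`. -/
def Biadmissible {m0 : MeasurableSpace Ω} (𝓕 : MeasureTheory.Filtration ℝ m0) (T : ℝ)
    (μ : MeasureTheory.Measure Ω) (ψ : (Ω → ℝ) → (Ω → ℝ) → Ω → ℝ) : Prop :=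
  (∀ τ S (hτ : MemT0 𝓕 T τ) (hS : MemT0 𝓕 T S),
      Measurable[(hτ.1.max hS.1).measurableSpace] (ψ τ S) ∧ ∀ ω, 0 ≤ ψ τ S ω) ∧
  ∀ τ τ' S S', MemT0 𝓕 T τ → MemT0 𝓕 T τ' → MemT0 𝓕 T S → MemT0 𝓕 T S' →
    ∀ᵐ ω ∂μ, τ ω = τ' ω → S ω = S' ω → ψ τ S ω = ψ τ' S' ω

/-- `θn ↓ θ` a.s.: the sequence is a.s. nonincreasing and converges a.s. to `θ`. -/
def DownAS {m0 : MeasurableSpace Ω} (μ : MeasureTheory.Measure Ω)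
    (θn : ℕ → Ω → ℝ) (θ : Ω → ℝ) : Prop :=
  ∀ᵐ ω ∂μ, (∀ n, θn (n + 1) ω ≤ θn n ω) ∧
    Filter.Tendsto (fun n => θn n ω) Filter.atTop (nhds (θ ω))

/-- `θn ↑ θ` a.s.: the sequence is a.s. nondecreasing and converges a.s. to `θ`. -/
def UpAS {m0 : MeasurableSpace Ω} (μ : MeasureTheory.Measure Ω)
    (θn : ℕ → Ω → ℝ) (θ : Ω → ℝ) : Prop :=
  ∀ᵐ ω ∂μ, (∀ n, θn n ω ≤ θn (n + 1) ω) ∧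
    Filter.Tendsto (fun n => θn n ω) Filter.atTop (nhds (θ ω))

/-- The family `φ` is right continuous along stopping times in expectation. -/
def RCE {m0 : MeasurableSpace Ω} (𝓕 : MeasureTheory.Filtration ℝ m0) (T : ℝ)
    (μ : MeasureTheory.Measure Ω) (φ : (Ω → ℝ) → Ω → ℝ) : Prop :=
  ∀ θ, MemT0 𝓕 T θ → ∀ θn : ℕ → Ω → ℝ, (∀ n, MemT0 𝓕 T (θn n)) → DownAS μ θn θ →
    Filter.Tendsto (fun n => ∫ ω, φ (θn n) ω ∂μ) Filter.atTop (nhds (∫ ω, φ θ ω ∂μ))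

/-- The family `φ` is left continuous along stopping times in expectation. -/
def LCE {m0 : MeasurableSpace Ω} (𝓕 : MeasureTheory.Filtration ℝ m0) (T : ℝ)
    (μ : MeasureTheory.Measure Ω) (φ : (Ω → ℝ) → Ω → ℝ) : Prop :=
  ∀ θ, MemT0 𝓕 T θ → ∀ θn : ℕ → Ω → ℝ, (∀ n, MemT0 𝓕 T (θn n)) → UpAS μ θn θ →
    Filter.Tendsto (fun n => ∫ ω, φ (θn n) ω ∂μ) Filter.atTop (nhds (∫ ω, φ θ ω ∂μ))

/-- The biadmissible family `ψ` is uniformly right continuous in expectation along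
stopping times: for `S_n ↓ S` a.s. (all in `T_0`), the expectation of the essential
supremum over `θ ∈ T_0` of `|ψ(θ, S) - ψ(θ, S_n)|` (resp. `|ψ(S, θ) - ψ(S_n, θ)|`)
tends to `0`. -/
def URCE {m0 : MeasurableSpace Ω} (𝓕 : MeasureTheory.Filtration ℝ m0) (T : ℝ)
    (μ : MeasureTheory.Measure Ω) (ψ : (Ω → ℝ) → (Ω → ℝ) → Ω → ℝ) : Prop :=
  ∀ S, MemT0 𝓕 T S → ∀ Sn : ℕ → Ω → ℝ, (∀ n, MemT0 𝓕 T (Sn n)) → DownAS μ Sn S →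
    (∀ D : ℕ → Ω → ℝ,
      (∀ n, IsEssSupFam μ (MemT0 𝓕 T) (fun θ ω => |ψ θ S ω - ψ θ (Sn n) ω|) (D n)) →
      Filter.Tendsto (fun n => ∫ ω, D n ω ∂μ) Filter.atTop (nhds 0)) ∧
    ∀ D : ℕ → Ω → ℝ,
      (∀ n, IsEssSupFam μ (MemT0 𝓕 T) (fun θ ω => |ψ S θ ω - ψ (Sn n) θ ω|) (D n)) →
      Filter.Tendsto (fun n => ∫ ω, D n ω ∂μ) Filter.atTop (nhds 0)

/-- The biadmissible family `ψ` is uniformly left continuous in expectation along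
stopping times. -/
def ULCE {m0 : MeasurableSpace Ω} (𝓕 : MeasureTheory.Filtration ℝ m0) (T : ℝ)
    (μ : MeasureTheory.Measure Ω) (ψ : (Ω → ℝ) → (Ω → ℝ) → Ω → ℝ) : Prop :=
  ∀ S, MemT0 𝓕 T S → ∀ Sn : ℕ → Ω → ℝ, (∀ n, MemT0 𝓕 T (Sn n)) → UpAS μ Sn S →
    (∀ D : ℕ → Ω → ℝ,
      (∀ n, IsEssSupFam μ (MemT0 𝓕 T) (fun θ ω => |ψ θ S ω - ψ θ (Sn n) ω|) (D n)) →
      Filter.Tendsto (fun n => ∫ ω, D n ω ∂μ) Filter.atTop (nhds 0)) ∧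
    ∀ D : ℕ → Ω → ℝ,
      (∀ n, IsEssSupFam μ (MemT0 𝓕 T) (fun θ ω => |ψ S θ ω - ψ (Sn n) θ ω|) (D n)) →
      Filter.Tendsto (fun n => ∫ ω, D n ω ∂μ) Filter.atTop (nhds 0)

section Aux

variable {m0 : MeasurableSpace Ω} {μ : Measure Ω} {𝓕 : Filtration ℝ m0} {T : ℝ}
  {τ σ ρ τ' : Ω → ℝ}

lemma MemT0.nonneg (hτ : MemT0 𝓕 T τ) (ω : Ω) : 0 ≤ τ ω := (hτ.2 ω).1

lemma MemT0.le_T (hτ : MemT0 𝓕 T τ) (ω : Ω) : τ ω ≤ T := (hτ.2 ω).2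

lemma MemT0.measSet_le (hτ : MemT0 𝓕 T τ) (t : ℝ) : MeasurableSet[𝓕 t] {ω | τ ω ≤ t} := by
  have := hτ.1 t
  simpa only [WithTop.coe_le_coe] using this

lemma memT0_const (hT : 0 ≤ T) {c : ℝ} (hc : c ∈ Set.Icc (0:ℝ) T) :
    MemT0 𝓕 T (fun _ => c) :=
  ⟨isStoppingTime_const 𝓕 c, fun _ => hc⟩

lemma MemT0.min (hτ : MemT0 𝓕 T τ) (hσ : MemT0 𝓕 T σ) :
    MemT0 𝓕 T (fun ω => min (τ ω) (σ ω)) :=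
  ⟨hτ.1.min hσ.1, fun ω => ⟨le_min (hτ.nonneg ω) (hσ.nonneg ω),
    min_le_of_left_le (hτ.le_T ω)⟩⟩

lemma MemT0.max (hτ : MemT0 𝓕 T τ) (hσ : MemT0 𝓕 T σ) :
    MemT0 𝓕 T (fun ω => max (τ ω) (σ ω)) :=
  ⟨hτ.1.max hσ.1, fun ω => ⟨le_max_of_le_left (hτ.nonneg ω),
    max_le (hτ.le_T ω) (hσ.le_T ω)⟩⟩

lemma MemT0.measurable (hτ : MemT0 𝓕 T τ) : Measurable τ :=
  measurable_of_Iic fun t => 𝓕.le t _ (hτ.measSet_le t)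

lemma MemT0.integrable [IsProbabilityMeasure μ] (hτ : MemT0 𝓕 T τ) :
    Integrable τ μ := by
  refine Integrable.mono' (integrable_const T) hτ.measurable.aestronglyMeasurable
    (Filter.Eventually.of_forall fun ω => ?_)
  rw [Real.norm_eq_abs, abs_le]
  exact ⟨le_trans (neg_nonpos.2 (le_trans (hτ.nonneg ω) (hτ.le_T ω))) (hτ.nonneg ω), hτ.le_T ω⟩

lemma null_mem_filtration (hFnull : ∀ A : Set Ω, μ A = 0 → MeasurableSet[𝓕 0] A)
    {t : ℝ} (ht : 0 ≤ t) {A : Set Ω} (hA : μ A = 0) : MeasurableSet[𝓕 t] A :=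
  𝓕.mono ht _ (hFnull A hA)

lemma memT0_congr_ae (hFnull : ∀ A : Set Ω, μ A = 0 → MeasurableSet[𝓕 0] A)
    (hτ : MemT0 𝓕 T τ) (hbd : ∀ ω, τ' ω ∈ Set.Icc (0:ℝ) T) (hee : τ =ᵐ[μ] τ') :
    MemT0 𝓕 T τ' := by
  refine ⟨fun t => ?_, hbd⟩
  rcases lt_or_ge t 0 with ht | ht
  · have : {ω | τ' ω ≤ t} = (∅ : Set Ω) := by
      ext ω; simp only [Set.mem_setOf_eq, Set.mem_empty_iff_false, iff_false, not_le]
      exact lt_of_lt_of_le ht (hbd ω).1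
    simp only [WithTop.coe_le_coe]
    rw [this]; exact @MeasurableSet.empty _ (𝓕 t)
  · have hE : μ {ω | ¬ τ ω = τ' ω} = 0 := hee
    have hid : {ω | τ' ω ≤ t} =
        ({ω | τ ω ≤ t} ∩ {ω | ¬ τ ω = τ' ω}ᶜ) ∪ ({ω | τ' ω ≤ t} ∩ {ω | ¬ τ ω = τ' ω}) := by
      ext ω
      by_cases h : τ ω = τ' ω
      · simp [h, Set.mem_setOf_eq]
      · simp [h, Set.mem_setOf_eq]
    simp only [WithTop.coe_le_coe]
    rw [hid]
    exact (( hτ.measSet_le t).inter (null_mem_filtration hFnull ht hE).compl).union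
      (null_mem_filtration hFnull ht (measure_mono_null Set.inter_subset_right hE))

lemma stoppingTime_measurableSpace_le_congr_ae
    (hFnull : ∀ A : Set Ω, μ A = 0 → MeasurableSet[𝓕 0] A)
    (hτ : MemT0 𝓕 T τ) (hτ' : MemT0 𝓕 T τ') (hee : τ =ᵐ[μ] τ') :
    hτ.1.measurableSpace ≤ hτ'.1.measurableSpace := by
  intro s hs
  rw [IsStoppingTime.measurableSet] at hs ⊢
  simp only [WithTop.coe_le_coe] at hs ⊢
  refine ⟨hs.1, fun t => ?_⟩
  rcases lt_or_ge t 0 with ht | ht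
  · have : s ∩ {ω | τ' ω ≤ t} = (∅ : Set Ω) := by
      ext ω
      simp only [Set.mem_inter_iff, Set.mem_setOf_eq, Set.mem_empty_iff_false, iff_false]
      exact fun h => absurd h.2 (not_le.2 (lt_of_lt_of_le ht (hτ'.nonneg ω)))
    rw [this]; exact @MeasurableSet.empty _ (𝓕 t)
  · have hE : μ {ω | ¬ τ ω = τ' ω} = 0 := hee
    have hid : s ∩ {ω | τ' ω ≤ t} =
        ((s ∩ {ω | τ ω ≤ t}) ∩ {ω | ¬ τ ω = τ' ω}ᶜ) ∪
          ((s ∩ {ω | τ' ω ≤ t}) ∩ {ω | ¬ τ ω = τ' ω}) := by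
      ext ω
      by_cases h : τ ω = τ' ω
      · simp [h, Set.mem_setOf_eq]
      · simp [h, Set.mem_setOf_eq]
    rw [hid]
    exact ((hs.2 t).inter (null_mem_filtration hFnull ht hE).compl).union
      (null_mem_filtration hFnull ht (measure_mono_null Set.inter_subset_right hE))

lemma stoppingTime_measurableSpace_congr_ae
    (hFnull : ∀ A : Set Ω, μ A = 0 → MeasurableSet[𝓕 0] A)
    (hτ : MemT0 𝓕 T τ) (hτ' : MemT0 𝓕 T τ') (hee : τ =ᵐ[μ] τ') :
    hτ.1.measurableSpace = hτ'.1.measurableSpace :=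
  le_antisymm (stoppingTime_measurableSpace_le_congr_ae hFnull hτ hτ' hee)
    (stoppingTime_measurableSpace_le_congr_ae hFnull hτ' hτ hee.symm)

lemma memT0_piecewise (hρ : MemT0 𝓕 T ρ) (hτ : MemT0 𝓕 T τ) (hσ : MemT0 𝓕 T σ)
    {A : Set Ω} [DecidablePred (· ∈ A)] (hA : MeasurableSet[hρ.1.measurableSpace] A)
    (h1 : ∀ ω, ρ ω ≤ τ ω) (h2 : ∀ ω, ρ ω ≤ σ ω) :
    MemT0 𝓕 T (A.piecewise τ σ) := by
  constructor
  · intro t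
    have hid : {ω | A.piecewise τ σ ω ≤ t} =
        (A ∩ {ω | τ ω ≤ t}) ∪ (Aᶜ ∩ {ω | σ ω ≤ t}) := by
      ext ω
      by_cases h : ω ∈ A
      · simp [Set.piecewise, h]
      · simp [Set.piecewise, h]
    have e1 : A ∩ {ω | τ ω ≤ t} = (A ∩ {ω | ρ ω ≤ t}) ∩ {ω | τ ω ≤ t} := by
      ext ω
      exact ⟨fun h => ⟨⟨h.1, le_trans (h1 ω) h.2⟩, h.2⟩, fun h => ⟨h.1.1, h.2⟩⟩
    have e2 : Aᶜ ∩ {ω | σ ω ≤ t} = (A ∩ {ω | ρ ω ≤ t})ᶜ ∩ ({ω | ρ ω ≤ t} ∩ {ω | σ ω ≤ t}) := by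
      ext ω
      constructor
      · intro h
        exact ⟨fun hh => h.1 hh.1, ⟨le_trans (h2 ω) h.2, h.2⟩⟩
      · intro h
        refine ⟨fun hh => h.1 ⟨hh, h.2.1⟩, h.2.2⟩
    have hAt : MeasurableSet[𝓕 t] (A ∩ {ω | ρ ω ≤ t}) := by
      have := ((hρ.1.measurableSet A).mp hA).2 t
      simpa only [WithTop.coe_le_coe] using this
    simp only [WithTop.coe_le_coe]
    rw [hid, e1, e2]
    exact ((hAt.inter (hτ.measSet_le t))).union (hAt.compl.inter ((hρ.measSet_le t).inter (hσ.measSet_le t)))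
  · intro ω
    by_cases h : ω ∈ A
    · simpa [Set.piecewise, h] using hτ.2 ω
    · simpa [Set.piecewise, h] using hσ.2 ω

end Aux
section Tools

variable {m0 : MeasurableSpace Ω} {μ : Measure Ω} {𝓕 : Filtration ℝ m0} {T : ℝ}
  {τ σ ρ τ' : Ω → ℝ}

lemma integrable_of_abs_le [IsFiniteMeasure μ] {f : Ω → ℝ} {C : ℝ}
    (hmeas : AEStronglyMeasurable f μ) (hbd : ∀ ω, |f ω| ≤ C) : Integrable f μ :=
  Integrable.mono' (integrable_const C) hmeas
    (Filter.Eventually.of_forall fun ω => by rw [Real.norm_eq_abs]; exact hbd ω)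

lemma ae_eq_of_ae_le_of_integral_ge {f g : Ω → ℝ} (hfi : Integrable f μ)
    (hgi : Integrable g μ) (hle : f ≤ᵐ[μ] g) (hint : ∫ ω, g ω ∂μ ≤ ∫ ω, f ω ∂μ) :
    f =ᵐ[μ] g := by
  have h0 : (0:Ω → ℝ) ≤ᵐ[μ] fun ω => g ω - f ω := by
    filter_upwards [hle] with ω h
    simp only [Pi.zero_apply]
    linarith
  have hi : Integrable (fun ω => g ω - f ω) μ := hgi.sub hfi
  have hz : ∫ ω, (g ω - f ω) ∂μ = 0 := by
    have hge : 0 ≤ ∫ ω, (g ω - f ω) ∂μ := integral_nonneg_of_ae h0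
    rw [integral_sub hgi hfi] at hge ⊢
    linarith
  have := (integral_eq_zero_iff_of_nonneg_ae h0 hi).mp hz
  filter_upwards [this] with ω h
  have : g ω - f ω = 0 := h
  linarith

lemma ae_le_of_forall_setIntegral_le_subalg {m : MeasurableSpace Ω} (hm : m ≤ m0)
    [IsFiniteMeasure μ] {f g : Ω → ℝ} (hfi : Integrable f μ) (hgi : Integrable g μ)
    (hfm : StronglyMeasurable[m] f) (hgm : StronglyMeasurable[m] g)
    (h : ∀ A, MeasurableSet[m] A → ∫ ω in A, f ω ∂μ ≤ ∫ ω in A, g ω ∂μ) :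
    f ≤ᵐ[μ] g := by
  have hf' : Integrable f (μ.trim hm) := hfi.trim hm hfm
  have hg' : Integrable g (μ.trim hm) := hgi.trim hm hgm
  have : f ≤ᵐ[μ.trim hm] g := by
    refine ae_le_of_forall_setIntegral_le hf' hg' fun s hs _ => ?_
    rw [← setIntegral_trim hm hfm hs, ← setIntegral_trim hm hgm hs]
    exact h s hs
  exact ae_le_of_ae_le_trim this

lemma ae_le_of_forall_setIntegral_le_subalg' {m : MeasurableSpace Ω} (hm : m ≤ m0)
    [IsFiniteMeasure μ] {f g : Ω → ℝ} (hfi : Integrable f μ) (hgi : Integrable g μ)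
    (hfm : ∃ f', StronglyMeasurable[m] f' ∧ f =ᵐ[μ] f')
    (hgm : ∃ g', StronglyMeasurable[m] g' ∧ g =ᵐ[μ] g')
    (h : ∀ A, MeasurableSet[m] A → ∫ ω in A, f ω ∂μ ≤ ∫ ω in A, g ω ∂μ) :
    f ≤ᵐ[μ] g := by
  obtain ⟨f', hf'm, hff'⟩ := hfm
  obtain ⟨g', hg'm, hgg'⟩ := hgm
  have hf'i : Integrable f' μ := hfi.congr hff'
  have hg'i : Integrable g' μ := hgi.congr hgg'
  have key : f' ≤ᵐ[μ] g' := by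
    refine ae_le_of_forall_setIntegral_le_subalg hm hf'i hg'i hf'm hg'm fun A hA => ?_
    have e1 : ∫ ω in A, f' ω ∂μ = ∫ ω in A, f ω ∂μ :=
      integral_congr_ae (ae_restrict_of_ae hff'.symm)
    have e2 : ∫ ω in A, g' ω ∂μ = ∫ ω in A, g ω ∂μ :=
      integral_congr_ae (ae_restrict_of_ae hgg'.symm)
    rw [e1, e2]
    exact h A hA
  calc f =ᵐ[μ] f' := hff'
    _ ≤ᵐ[μ] g' := key
    _ =ᵐ[μ] g := hgg'.symm

/-- Existence of an essential supremum, together with an attaining monotone sequence,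
for a directed family of integrable functions dominated by an integrable `g`, all
(a.e. equal to) `m`-measurable functions. -/
lemma exists_essSupFam_seq [IsProbabilityMeasure μ] {m : MeasurableSpace Ω} (hm : m ≤ m0)
    {ι : Sort*} (P : ι → Prop) (f : ι → Ω → ℝ) (g : Ω → ℝ)
    (hgm : Measurable[m] g) (hg : Integrable g μ)
    (hfi : ∀ i, P i → Integrable (f i) μ)
    (hfm : ∀ i, P i → ∃ f', Measurable[m] f' ∧ f i =ᵐ[μ] f')
    (hdom : ∀ i, P i → f i ≤ᵐ[μ] g)
    (hne : ∃ i, P i)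
    (hdir : ∀ i j, P i → P j → ∃ k, P k ∧ f i ≤ᵐ[μ] f k ∧ f j ≤ᵐ[μ] f k) :
    ∃ (v : Ω → ℝ) (s : ℕ → ι), Measurable[m] v ∧ Integrable v μ ∧ (∀ n, P (s n)) ∧
      (∀ n, f (s n) ≤ᵐ[μ] f (s (n+1))) ∧
      (∀ᵐ ω ∂μ, Filter.Tendsto (fun n => f (s n) ω) Filter.atTop (nhds (v ω))) ∧
      Filter.Tendsto (fun n => ∫ ω, f (s n) ω ∂μ) Filter.atTop (nhds (∫ ω, v ω ∂μ)) ∧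
      IsEssSupFam μ P f v := by
  classical
  haveI hne' : Nonempty {i // P i} := ⟨⟨hne.choose, hne.choose_spec⟩⟩
  set c : ℝ := ⨆ i : {i // P i}, ∫ ω, f i.1 ω ∂μ with hc
  have hbdd : BddAbove (Set.range fun i : {i // P i} => ∫ ω, f i.1 ω ∂μ) := by
    refine ⟨∫ ω, g ω ∂μ, ?_⟩
    rintro x ⟨i, rfl⟩
    exact integral_mono_ae (hfi i.1 i.2) hg (hdom i.1 i.2)
  have hle_c : ∀ i : {i // P i}, ∫ ω, f i.1 ω ∂μ ≤ c := fun i => le_ciSup hbdd i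
  -- a sequence approximating the sup
  have hr : ∀ n : ℕ, ∃ i : {i // P i}, c - 1/(n+1) < ∫ ω, f i.1 ω ∂μ := by
    intro n
    refine exists_lt_of_lt_ciSup ?_
    have : (0:ℝ) < 1/(n+1) := by positivity
    linarith
  choose r hr' using hr
  -- directedness on the subtype
  have hD : ∀ i j : {i // P i}, ∃ k : {i // P i},
      f i.1 ≤ᵐ[μ] f k.1 ∧ f j.1 ≤ᵐ[μ] f k.1 := by
    intro i j
    obtain ⟨k, hk, h1, h2⟩ := hdir i.1 j.1 i.2 j.2
    exact ⟨⟨k, hk⟩, h1, h2⟩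
  choose D hD1 hD2 using hD
  -- the monotone sequence
  let s : ℕ → {i // P i} := fun n => Nat.rec (r 0) (fun n sn => D sn (r (n+1))) n
  have hs_succ : ∀ n, s (n+1) = D (s n) (r (n+1)) := fun n => rfl
  have hmono : ∀ n, f (s n).1 ≤ᵐ[μ] f (s (n+1)).1 := by
    intro n; rw [hs_succ]; exact hD1 _ _
  have hsr : ∀ n, ∫ ω, f (r n).1 ω ∂μ ≤ ∫ ω, f (s n).1 ω ∂μ := by
    intro n
    cases n with
    | zero => exact le_rfl
    | succ n =>
      rw [hs_succ]
      exact integral_mono_ae (hfi _ (r (n+1)).2) (hfi _ (D (s n) (r (n+1))).2) (hD2 _ _)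
  have hint_lb : ∀ n, c - 1/(n+1) < ∫ ω, f (s n).1 ω ∂μ :=
    fun n => lt_of_lt_of_le (hr' n) (hsr n)
  -- measurable versions
  have hfm' : ∀ n, ∃ f', Measurable[m] f' ∧ f (s n).1 =ᵐ[μ] f' := fun n => hfm _ (s n).2
  choose F hFm hFe using hfm'
  set v : Ω → ℝ := fun ω => ⨆ n, min (F n ω) (g ω) with hv
  have hvm : Measurable[m] v := by
    refine Measurable.iSup fun n => ?_
    exact (hFm n).min hgm
  -- the good a.e. set
  have hgood : ∀ᵐ ω ∂μ, (∀ n, f (s n).1 ω = F n ω) ∧ (∀ n, f (s n).1 ω ≤ f (s (n+1)).1 ω)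
      ∧ (∀ n, f (s n).1 ω ≤ g ω) := by
    have h1 : ∀ᵐ ω ∂μ, ∀ n, f (s n).1 ω = F n ω := ae_all_iff.mpr fun n => hFe n
    have h2 : ∀ᵐ ω ∂μ, ∀ n, f (s n).1 ω ≤ f (s (n+1)).1 ω := ae_all_iff.mpr fun n => hmono n
    have h3 : ∀ᵐ ω ∂μ, ∀ n, f (s n).1 ω ≤ g ω := ae_all_iff.mpr fun n => hdom _ (s n).2
    filter_upwards [h1, h2, h3] with ω a b c
    exact ⟨a, b, c⟩
  have hv_lim : ∀ᵐ ω ∂μ, Filter.Tendsto (fun n => f (s n).1 ω) Filter.atTop (nhds (v ω))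
      ∧ f (s 0).1 ω ≤ v ω ∧ v ω ≤ g ω := by
    filter_upwards [hgood] with ω ⟨he, hmo, hb⟩
    have hmin : ∀ n, min (F n ω) (g ω) = f (s n).1 ω := by
      intro n; rw [← he n]; exact min_eq_left (hb n)
    have hvv : v ω = ⨆ n, f (s n).1 ω := by
      simp only [hv]
      congr 1
      funext n
      exact hmin n
    have hmono' : Monotone fun n => f (s n).1 ω := monotone_nat_of_le_succ hmo
    have hbdd' : BddAbove (Set.range fun n => f (s n).1 ω) := by
      refine ⟨g ω, ?_⟩; rintro x ⟨n, rfl⟩; exact hb n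
    refine ⟨hvv ▸ tendsto_atTop_ciSup hmono' hbdd', ?_, ?_⟩
    · rw [hvv]; exact le_ciSup hbdd' 0
    · rw [hvv]; exact ciSup_le hb
  have hBi : Integrable (fun ω => |g ω| + |f (s 0).1 ω|) μ := hg.abs.add (hfi _ (s 0).2).abs
  have hvi : Integrable v μ := by
    refine Integrable.mono' hBi ((hvm.mono hm le_rfl).aestronglyMeasurable) ?_
    filter_upwards [hv_lim] with ω ⟨_, h1, h2⟩
    show ‖v ω‖ ≤ |g ω| + |f (s 0).1 ω|
    rw [Real.norm_eq_abs, abs_le]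
    have hg1 := abs_nonneg (g ω)
    have hg2 := abs_nonneg (f (s 0).1 ω)
    have hg3 := neg_abs_le (f (s 0).1 ω)
    have hg4 := le_abs_self (g ω)
    exact ⟨by linarith, by linarith⟩
  -- dominated convergence for the integrals
  have hbound : ∀ n, ∀ᵐ ω ∂μ, ‖f (s n).1 ω‖ ≤ (fun ω => |g ω| + |f (s 0).1 ω|) ω := by
    intro n
    filter_upwards [hgood] with ω ⟨_, hmo, hb⟩
    have hlow : f (s 0).1 ω ≤ f (s n).1 ω := by
      have : ∀ k, f (s 0).1 ω ≤ f (s k).1 ω := by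
        intro k
        induction k with
        | zero => exact le_rfl
        | succ k ih => exact le_trans ih (hmo k)
      exact this n
    show ‖f (s n).1 ω‖ ≤ |g ω| + |f (s 0).1 ω|
    rw [Real.norm_eq_abs, abs_le]
    have hg1 := abs_nonneg (g ω)
    have hg2 := abs_nonneg (f (s 0).1 ω)
    have hg3 := neg_abs_le (f (s 0).1 ω)
    have hg4 := le_abs_self (g ω)
    have hb' := hb n
    exact ⟨by linarith, by linarith⟩
  have hint_tendsto : Filter.Tendsto (fun n => ∫ ω, f (s n).1 ω ∂μ) Filter.atTop
      (nhds (∫ ω, v ω ∂μ)) := by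
    refine MeasureTheory.tendsto_integral_of_dominated_convergence _
      (fun n => (hfi _ (s n).2).aestronglyMeasurable) hBi
      hbound ?_
    filter_upwards [hv_lim] with ω ⟨h, _, _⟩ using h
  have hint_c : ∫ ω, v ω ∂μ = c := by
    have h1 : Filter.Tendsto (fun n : ℕ => c - 1/(n+1:ℝ)) Filter.atTop (nhds c) := by
      have : Filter.Tendsto (fun n : ℕ => 1/(n+1:ℝ)) Filter.atTop (nhds 0) :=
        tendsto_one_div_add_atTop_nhds_zero_nat
      simpa using Filter.Tendsto.sub (tendsto_const_nhds) this
    refine le_antisymm ?_ ?_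
    · exact le_of_tendsto' hint_tendsto fun n => hle_c (s n)
    · exact le_of_tendsto_of_tendsto' h1 hint_tendsto fun n => le_of_lt (hint_lb n)
  -- essential supremum properties
  have hup : ∀ i, P i → f i ≤ᵐ[μ] v := by
    intro i hi
    -- chain dominating both f i and f (s n)
    have ht : ∀ n, ∃ k : {i // P i}, f i ≤ᵐ[μ] f k.1 ∧ f (s n).1 ≤ᵐ[μ] f k.1 := by
      intro n
      obtain ⟨k, hk, h1, h2⟩ := hdir i (s n).1 hi (s n).2
      exact ⟨⟨k, hk⟩, h1, h2⟩
    choose t ht1 ht2 using ht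
    have hmax_int : ∀ n, Integrable (fun ω => max (f i ω) (f (s n).1 ω)) μ := by
      intro n
      have h := (hfi i hi).sup (hfi _ (s n).2)
      exact h.congr (Filter.Eventually.of_forall fun ω => by
        simp [Pi.sup_apply])
    have hmax_le : ∀ n, ∫ ω, max (f i ω) (f (s n).1 ω) ∂μ ≤ c := by
      intro n
      refine le_trans (integral_mono_ae (hmax_int n) (hfi _ (t n).2) ?_) (hle_c (t n))
      filter_upwards [ht1 n, ht2 n] with ω h1 h2 using max_le h1 h2
    have hmax_tendsto : Filter.Tendsto (fun n => ∫ ω, max (f i ω) (f (s n).1 ω) ∂μ)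
        Filter.atTop (nhds (∫ ω, max (f i ω) (v ω) ∂μ)) := by
      refine MeasureTheory.tendsto_integral_of_dominated_convergence
        (fun ω => |f i ω| + (|g ω| + |f (s 0).1 ω|))
        (fun n => (hmax_int n).aestronglyMeasurable)
        ((hfi i hi).abs.add (hg.abs.add (hfi _ (s 0).2).abs)) ?_ ?_
      · intro n
        filter_upwards [hbound n] with ω hb
        show ‖max (f i ω) (f (s n).1 ω)‖ ≤ |f i ω| + (|g ω| + |f (s 0).1 ω|)
        have hb' : |f (s n).1 ω| ≤ |g ω| + |f (s 0).1 ω| := hb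
        rw [Real.norm_eq_abs]
        refine le_trans (abs_max_le_max_abs_abs) ?_
        have h1 := abs_nonneg (f i ω)
        have h2 := abs_nonneg (g ω)
        have h3 := abs_nonneg (f (s 0).1 ω)
        exact max_le (by linarith) (by linarith)
      · filter_upwards [hv_lim] with ω ⟨h, _, _⟩
        exact (tendsto_const_nhds.max h)
    have h1 : ∫ ω, max (f i ω) (v ω) ∂μ ≤ ∫ ω, v ω ∂μ := by
      rw [hint_c]; exact le_of_tendsto' hmax_tendsto hmax_le
    have hmaxvi : Integrable (fun ω => max (f i ω) (v ω)) μ := by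
      have h := (hfi i hi).sup hvi
      exact h.congr (Filter.Eventually.of_forall fun ω => by
        simp [Pi.sup_apply])
    have h2 : (fun ω => max (f i ω) (v ω)) =ᵐ[μ] v := by
      refine (ae_eq_of_ae_le_of_integral_ge hvi hmaxvi
        (Filter.Eventually.of_forall fun ω => le_max_right _ _) h1).symm
    filter_upwards [h2] with ω h
    rw [← h]
    exact le_max_left _ _
  refine ⟨v, fun n => (s n).1, hvm, hvi, fun n => (s n).2, hmono, ?_, hint_tendsto, hup, ?_⟩
  · filter_upwards [hv_lim] with ω ⟨h, _, _⟩ using h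
  · intro w hw
    have hwn : ∀ᵐ ω ∂μ, ∀ n, f (s n).1 ω ≤ w ω :=
      MeasureTheory.ae_all_iff.mpr fun n => hw _ (s n).2
    filter_upwards [hwn, hv_lim] with ω hwω ⟨h, _, _⟩
    exact le_of_tendsto' h fun n => hwω n

end Tools
section InfSup

variable {m0 : MeasurableSpace Ω} {μ : Measure Ω} {𝓕 : Filtration ℝ m0} {T : ℝ}

lemma memT0_iInf_seq (hFright : ∀ t : ℝ, 𝓕 t = ⨅ s ∈ Set.Ioi t, 𝓕 s)
    {s : ℕ → Ω → ℝ} (hs : ∀ n, MemT0 𝓕 T (s n)) :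
    MemT0 𝓕 T (fun ω => ⨅ n, s n ω) := by
  have hbb : ∀ ω, BddBelow (Set.range fun n => s n ω) := by
    intro ω
    exact ⟨0, by rintro x ⟨n, rfl⟩; exact (hs n).nonneg ω⟩
  constructor
  · intro t
    have hset : {ω | (⨅ n, s n ω) ≤ t} =
        ⋂ (k : ℕ), ⋃ (n : ℕ), {ω | s n ω < t + 1/(k+1)} := by
      ext ω
      simp only [Set.mem_setOf_eq, Set.mem_iInter, Set.mem_iUnion]
      constructor
      · intro h k
        have hlt : (⨅ n, s n ω) < t + 1/(k+1) := by
          have : (0:ℝ) < 1/(k+1) := by positivity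
          linarith
        exact exists_lt_of_ciInf_lt hlt
      · intro h
        by_contra hlt
        push_neg at hlt
        obtain ⟨k, hk⟩ := exists_nat_one_div_lt (sub_pos.mpr hlt)
        obtain ⟨n, hn⟩ := h k
        have : (⨅ m, s m ω) ≤ s n ω := ciInf_le (hbb ω) n
        have hk' : (1:ℝ)/(k+1) < (⨅ n, s n ω) - t := hk
        linarith
    simp only [WithTop.coe_le_coe]
    rw [hset, hFright t]
    refine MeasurableSpace.measurableSet_iInf.mpr fun u => ?_
    refine MeasurableSpace.measurableSet_iInf.mpr fun hu => ?_
    have hu' : t < u := hu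
    obtain ⟨K, hK⟩ := exists_nat_one_div_lt (sub_pos.mpr hu')
    have hKu : t + 1/(K+1) ≤ u := by linarith
    set A : ℕ → Set Ω := fun k => ⋃ (n : ℕ), {ω | s n ω < t + 1/(k+1)} with hA
    have hAanti : ∀ k k', k ≤ k' → A k' ⊆ A k := by
      intro k k' hkk ω hω
      simp only [hA, Set.mem_iUnion, Set.mem_setOf_eq] at hω ⊢
      obtain ⟨n, hn⟩ := hω
      refine ⟨n, lt_of_lt_of_le hn ?_⟩
      have : (1:ℝ)/(k'+1) ≤ 1/(k+1) := by
        apply one_div_le_one_div_of_le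
        · positivity
        · exact_mod_cast by exact_mod_cast add_le_add_left (Nat.cast_le.mpr hkk) 1
      linarith
    have htail : ⋂ k, A k = ⋂ k, A (k + K) := by
      apply Set.Subset.antisymm
      · intro ω hω
        simp only [Set.mem_iInter] at hω ⊢
        exact fun k => hω (k + K)
      · intro ω hω
        simp only [Set.mem_iInter] at hω ⊢
        intro k
        exact hAanti k (k + K) (Nat.le_add_right k K) (hω k)
    rw [htail]
    refine MeasurableSet.iInter fun k => ?_
    refine MeasurableSet.iUnion fun n => ?_
    have h1 : t + 1/(k+K+1 : ℝ) ≤ u := by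
      have : (1:ℝ)/(k+K+1) ≤ 1/(K+1) := by
        apply one_div_le_one_div_of_le
        · positivity
        · push_cast; linarith
      linarith
    have h2 : MeasurableSet[𝓕 (t + 1/(k+K+1 : ℝ))] {ω | s n ω < t + 1/(k+K+1:ℝ)} :=
      by
        have := (hs n).1.measurableSet_lt (t + 1/(k+K+1 : ℝ))
        simpa only [WithTop.coe_lt_coe] using this
    have := 𝓕.mono h1 _ h2
    convert this using 3
    push_cast
    ring
  · intro ω
    constructor
    · exact le_ciInf fun n => (hs n).nonneg ω
    · exact le_trans (ciInf_le (hbb ω) 0) ((hs 0).le_T ω)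

lemma memT0_iSup_seq {s : ℕ → Ω → ℝ} (hs : ∀ n, MemT0 𝓕 T (s n)) :
    MemT0 𝓕 T (fun ω => ⨆ n, s n ω) := by
  have hba : ∀ ω, BddAbove (Set.range fun n => s n ω) := by
    intro ω
    exact ⟨T, by rintro x ⟨n, rfl⟩; exact (hs n).le_T ω⟩
  constructor
  · intro t
    have hset : {ω | (⨆ n, s n ω) ≤ t} = ⋂ n, {ω | s n ω ≤ t} := by
      ext ω
      simp only [Set.mem_setOf_eq, Set.mem_iInter]
      constructor
      · intro h n
        exact le_trans (le_ciSup (hba ω) n) h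
      · intro h
        exact ciSup_le h
    simp only [WithTop.coe_le_coe]
    rw [hset]
    exact MeasurableSet.iInter fun n => (hs n).measSet_le t
  · intro ω
    exact ⟨le_trans ((hs 0).nonneg ω) (le_ciSup (hba ω) 0),
      ciSup_le fun n => (hs n).le_T ω⟩

lemma exists_essInf_stopping [IsProbabilityMeasure μ]
    (hFright : ∀ t : ℝ, 𝓕 t = ⨅ s ∈ Set.Ioi t, 𝓕 s)
    (Q : (Ω → ℝ) → Prop) (hmem : ∀ θ, Q θ → MemT0 𝓕 T θ) (hne : ∃ θ, Q θ)
    (hmin : ∀ θ θ', Q θ → Q θ' → Q (fun ω => min (θ ω) (θ' ω))) :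
    ∃ (θhat : Ω → ℝ) (s : ℕ → Ω → ℝ), MemT0 𝓕 T θhat ∧ (∀ n, Q (s n)) ∧
      (∀ n ω, s (n+1) ω ≤ s n ω) ∧
      (∀ ω, Filter.Tendsto (fun n => s n ω) Filter.atTop (nhds (θhat ω))) ∧
      (∀ η, Q η → θhat ≤ᵐ[μ] η) := by
  classical
  haveI hne' : Nonempty {θ // Q θ} := ⟨⟨hne.choose, hne.choose_spec⟩⟩
  set C : ℝ := max T 0 with hC
  have habs : ∀ (θ : Ω → ℝ), Q θ → ∀ ω, |θ ω| ≤ C := by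
    intro θ hθ ω
    rw [abs_of_nonneg ((hmem θ hθ).nonneg ω)]
    exact le_max_of_le_left ((hmem θ hθ).le_T ω)
  have hint : ∀ (θ : Ω → ℝ), Q θ → Integrable θ μ := fun θ hθ =>
    integrable_of_abs_le (hmem θ hθ).measurable.aestronglyMeasurable (habs θ hθ)
  have hbddB : BddBelow (Set.range fun θ : {θ // Q θ} => ∫ ω, θ.1 ω ∂μ) := by
    refine ⟨0, ?_⟩
    rintro x ⟨θ, rfl⟩
    exact integral_nonneg fun ω => (hmem θ.1 θ.2).nonneg ω
  set c : ℝ := ⨅ θ : {θ // Q θ}, ∫ ω, θ.1 ω ∂μ with hc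
  have hcle : ∀ θ : {θ // Q θ}, c ≤ ∫ ω, θ.1 ω ∂μ := fun θ => ciInf_le hbddB θ
  have hr : ∀ n : ℕ, ∃ θ : {θ // Q θ}, ∫ ω, θ.1 ω ∂μ < c + 1/(n+1) := by
    intro n
    refine exists_lt_of_ciInf_lt ?_
    have : (0:ℝ) < 1/(n+1) := by positivity
    linarith
  choose r hr' using hr
  set s : ℕ → {θ // Q θ} := fun n => Nat.rec (r 0)
    (fun n sn => ⟨fun ω => min (sn.1 ω) ((r (n+1)).1 ω), hmin _ _ sn.2 (r (n+1)).2⟩) n with hsdef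
  have hs_succ : ∀ n ω, (s (n+1)).1 ω = min ((s n).1 ω) ((r (n+1)).1 ω) := fun n ω => rfl
  have hanti : ∀ n ω, (s (n+1)).1 ω ≤ (s n).1 ω := by
    intro n ω; rw [hs_succ]; exact min_le_left _ _
  have hsle : ∀ n ω, (s n).1 ω ≤ (r n).1 ω := by
    intro n ω
    cases n with
    | zero => exact le_rfl
    | succ n => rw [hs_succ]; exact min_le_right _ _
  have hsub : ∀ n, ∫ ω, (s n).1 ω ∂μ < c + 1/(n+1) := by
    intro n
    refine lt_of_le_of_lt ?_ (hr' n)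
    exact integral_mono_ae (hint _ (s n).2) (hint _ (r n).2)
      (Filter.Eventually.of_forall fun ω => hsle n ω)
  have hbb : ∀ ω, BddBelow (Set.range fun n => (s n).1 ω) := by
    intro ω
    exact ⟨0, by rintro x ⟨n, rfl⟩; exact (hmem _ (s n).2).nonneg ω⟩
  set θhat : Ω → ℝ := fun ω => ⨅ n, (s n).1 ω with hθhat
  have hθmem : MemT0 𝓕 T θhat := memT0_iInf_seq hFright (fun n => hmem _ (s n).2)
  have htend : ∀ ω, Filter.Tendsto (fun n => (s n).1 ω) Filter.atTop (nhds (θhat ω)) := by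
    intro ω
    exact tendsto_atTop_ciInf (antitone_nat_of_succ_le fun n => hanti n ω) (hbb ω)
  have hdom : Filter.Tendsto (fun n => ∫ ω, (s n).1 ω ∂μ) Filter.atTop
      (nhds (∫ ω, θhat ω ∂μ)) := by
    refine MeasureTheory.tendsto_integral_of_dominated_convergence (fun _ => C)
      (fun n => (hmem _ (s n).2).measurable.aestronglyMeasurable) (integrable_const C)
      (fun n => Filter.Eventually.of_forall fun ω => by
        rw [Real.norm_eq_abs]; exact habs _ (s n).2 ω)
      (Filter.Eventually.of_forall fun ω => htend ω)
  have hintc : ∫ ω, θhat ω ∂μ = c := by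
    have h1 : Filter.Tendsto (fun n : ℕ => c + 1/(n+1:ℝ)) Filter.atTop (nhds c) := by
      have : Filter.Tendsto (fun n : ℕ => 1/(n+1:ℝ)) Filter.atTop (nhds 0) :=
        tendsto_one_div_add_atTop_nhds_zero_nat
      simpa using Filter.Tendsto.add (tendsto_const_nhds (x := c)) this
    refine le_antisymm ?_ ?_
    · exact le_of_tendsto_of_tendsto' hdom h1 fun n => le_of_lt (hsub n)
    · exact ge_of_tendsto' hdom fun n => hcle (s n)
  refine ⟨θhat, fun n => (s n).1, hθmem, fun n => (s n).2, hanti, htend, ?_⟩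
  intro η hη
  have hmn : ∀ n, Q (fun ω => min ((s n).1 ω) (η ω)) := fun n => hmin _ _ (s n).2 hη
  have hmint : Filter.Tendsto (fun n => ∫ ω, min ((s n).1 ω) (η ω) ∂μ) Filter.atTop
      (nhds (∫ ω, min (θhat ω) (η ω) ∂μ)) := by
    refine MeasureTheory.tendsto_integral_of_dominated_convergence (fun _ => C)
      (fun n => (hmem _ (hmn n)).measurable.aestronglyMeasurable) (integrable_const C)
      (fun n => Filter.Eventually.of_forall fun ω => by
        rw [Real.norm_eq_abs]; exact habs _ (hmn n) ω)
      (Filter.Eventually.of_forall fun ω => (htend ω).min tendsto_const_nhds)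
  have hcmin : c ≤ ∫ ω, min (θhat ω) (η ω) ∂μ :=
    ge_of_tendsto' hmint fun n => hcle ⟨_, hmn n⟩
  have hminint : Integrable (fun ω => min (θhat ω) (η ω)) μ := by
    refine integrable_of_abs_le (C := C) (hθmem.measurable.min
      (hmem η hη).measurable).aestronglyMeasurable fun ω => ?_
    rw [abs_of_nonneg (le_min (hθmem.nonneg ω) ((hmem η hη).nonneg ω))]
    exact le_max_of_le_left (min_le_of_left_le (hθmem.le_T ω))
  have heq : (fun ω => min (θhat ω) (η ω)) =ᵐ[μ] θhat := by
    refine ae_eq_of_ae_le_of_integral_ge hminint (hθmem.integrable)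
      (Filter.Eventually.of_forall fun ω => min_le_left _ _) ?_
    rw [hintc]
    exact hcmin
  filter_upwards [heq] with ω h
  exact min_eq_left_iff.mp h

end InfSup
section Vfam

variable {m0 : MeasurableSpace Ω} {μ : Measure Ω} {𝓕 : Filtration ℝ m0} {T : ℝ}
  {φ : (Ω → ℝ) → Ω → ℝ} {Z : Ω → ℝ} {V : (Ω → ℝ) → Ω → ℝ} {S S' τ σ θ : Ω → ℝ}

lemma phi_sm (hφ : Admissible 𝓕 T μ φ) (hτ : MemT0 𝓕 T τ) :
    StronglyMeasurable[hτ.1.measurableSpace] (φ τ) :=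
  (hφ.1 τ hτ).1.stronglyMeasurable

lemma phi_meas (hφ : Admissible 𝓕 T μ φ) (hτ : MemT0 𝓕 T τ) :
    AEStronglyMeasurable (φ τ) μ :=
  ((hφ.1 τ hτ).1.mono hτ.1.measurableSpace_le le_rfl).aestronglyMeasurable

lemma phi_int (hφ : Admissible 𝓕 T μ φ) (hZ : IsEssSupFam μ (MemT0 𝓕 T) φ Z)
    (hZint : Integrable Z μ) (hτ : MemT0 𝓕 T τ) : Integrable (φ τ) μ := by
  refine hZint.mono' (phi_meas hφ hτ) ?_
  filter_upwards [hZ.1 τ hτ] with ω h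
  rw [Real.norm_eq_abs, abs_of_nonneg ((hφ.1 τ hτ).2 ω)]
  exact h

lemma condexp_phi_self (hφ : Admissible 𝓕 T μ φ) (hZ : IsEssSupFam μ (MemT0 𝓕 T) φ Z)
    (hZint : Integrable Z μ) (hτ : MemT0 𝓕 T τ) [SigmaFinite (μ.trim hτ.1.measurableSpace_le)] :
    μ[φ τ| hτ.1.measurableSpace] = φ τ :=
  condExp_of_stronglyMeasurable hτ.1.measurableSpace_le (phi_sm hφ hτ) (phi_int hφ hZ hZint hτ)

lemma Z_nonneg (hT : 0 ≤ T) (hφ : Admissible 𝓕 T μ φ)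
    (hZ : IsEssSupFam μ (MemT0 𝓕 T) φ Z) : (0 : Ω → ℝ) ≤ᵐ[μ] Z := by
  have h0 : MemT0 𝓕 T (fun _ => (0:ℝ)) := memT0_const hT ⟨le_rfl, hT⟩
  filter_upwards [hZ.1 _ h0] with ω h
  exact le_trans ((hφ.1 _ h0).2 ω) h

/-- the family of conditional expectations is upward directed -/
lemma cond_directed [IsProbabilityMeasure μ] (hφ : Admissible 𝓕 T μ φ)
    (hZ : IsEssSupFam μ (MemT0 𝓕 T) φ Z) (hZint : Integrable Z μ) (hS : MemT0 𝓕 T S) :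
    ∀ θ1 θ2, (MemT0 𝓕 T θ1 ∧ S ≤ᵐ[μ] θ1) → (MemT0 𝓕 T θ2 ∧ S ≤ᵐ[μ] θ2) →
      ∃ θ3, (MemT0 𝓕 T θ3 ∧ S ≤ᵐ[μ] θ3) ∧
        μ[φ θ1|hS.1.measurableSpace] ≤ᵐ[μ] μ[φ θ3|hS.1.measurableSpace] ∧
        μ[φ θ2|hS.1.measurableSpace] ≤ᵐ[μ] μ[φ θ3|hS.1.measurableSpace] := by
  classical
  rintro θ1 θ2 ⟨hθ1, hSθ1⟩ ⟨hθ2, hSθ2⟩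
  have hmle : hS.1.measurableSpace ≤ m0 := hS.1.measurableSpace_le
  set e1 : Ω → ℝ := μ[φ θ1|hS.1.measurableSpace] with he1
  set e2 : Ω → ℝ := μ[φ θ2|hS.1.measurableSpace] with he2
  set θ1' : Ω → ℝ := fun ω => max (θ1 ω) (S ω) with hθ1'def
  set θ2' : Ω → ℝ := fun ω => max (θ2 ω) (S ω) with hθ2'def
  have hθ1' : MemT0 𝓕 T θ1' := hθ1.max hS
  have hθ2' : MemT0 𝓕 T θ2' := hθ2.max hS
  have he1' : θ1' =ᵐ[μ] θ1 := by
    filter_upwards [hSθ1] with ω h using max_eq_left h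
  have he2' : θ2' =ᵐ[μ] θ2 := by
    filter_upwards [hSθ2] with ω h using max_eq_left h
  have hφ1 : φ θ1' =ᵐ[μ] φ θ1 := by
    filter_upwards [hφ.2 θ1' θ1 hθ1' hθ1, he1'] with ω h1 h2 using h1 h2
  have hφ2 : φ θ2' =ᵐ[μ] φ θ2 := by
    filter_upwards [hφ.2 θ2' θ2 hθ2' hθ2, he2'] with ω h1 h2 using h1 h2
  set A : Set Ω := {ω | e2 ω ≤ e1 ω} with hA
  have hAm : MeasurableSet[hS.1.measurableSpace] A :=
    measurableSet_le stronglyMeasurable_condExp.measurable stronglyMeasurable_condExp.measurable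
  set θ3 : Ω → ℝ := A.piecewise θ1' θ2' with hθ3def
  have hθ3 : MemT0 𝓕 T θ3 :=
    memT0_piecewise hS hθ1' hθ2' hAm (fun ω => le_max_right _ _) (fun ω => le_max_right _ _)
  have hSθ3 : S ≤ᵐ[μ] θ3 := by
    refine Filter.Eventually.of_forall fun ω => ?_
    by_cases hω : ω ∈ A
    · rw [hθ3def, Set.piecewise_eq_of_mem _ _ _ hω]; exact le_max_right _ _
    · rw [hθ3def, Set.piecewise_eq_of_notMem _ _ _ hω]; exact le_max_right _ _
  have hpw : φ θ3 =ᵐ[μ] A.piecewise (φ θ1') (φ θ2') := by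
    filter_upwards [hφ.2 θ3 θ1' hθ3 hθ1', hφ.2 θ3 θ2' hθ3 hθ2'] with ω h1 h2
    by_cases hω : ω ∈ A
    · rw [Set.piecewise_eq_of_mem _ _ _ hω]
      exact h1 (Set.piecewise_eq_of_mem _ _ _ hω)
    · rw [Set.piecewise_eq_of_notMem _ _ _ hω]
      exact h2 (Set.piecewise_eq_of_notMem _ _ _ hω)
  have hint1 : Integrable (φ θ1') μ := phi_int hφ hZ hZint hθ1'
  have hint2 : Integrable (φ θ2') μ := phi_int hφ hZ hZint hθ2'
  have hsplit : A.piecewise (φ θ1') (φ θ2') =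
      A.indicator (φ θ1') + Aᶜ.indicator (φ θ2') := by
    funext ω
    by_cases hω : ω ∈ A <;> simp [Set.piecewise, Set.indicator, hω]
  have hcond : μ[φ θ3|hS.1.measurableSpace] =ᵐ[μ] A.piecewise e1 e2 := by
    have c1 : μ[φ θ3|hS.1.measurableSpace] =ᵐ[μ] μ[A.piecewise (φ θ1') (φ θ2')|hS.1.measurableSpace] := condExp_congr_ae hpw
    have c2 : μ[A.piecewise (φ θ1') (φ θ2')|hS.1.measurableSpace] =ᵐ[μ]
        μ[A.indicator (φ θ1')|hS.1.measurableSpace] + μ[Aᶜ.indicator (φ θ2')|hS.1.measurableSpace] := by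
      rw [hsplit]
      have hAm0 : MeasurableSet[m0] A := hmle A hAm
      have hAcm0 : MeasurableSet[m0] Aᶜ := hmle Aᶜ hAm.compl
      exact condExp_add (hint1.indicator hAm0) (hint2.indicator hAcm0) _
    have c3 : μ[A.indicator (φ θ1')|hS.1.measurableSpace] =ᵐ[μ] A.indicator (μ[φ θ1'|hS.1.measurableSpace]) :=
      condExp_indicator hint1 hAm
    have c4 : μ[Aᶜ.indicator (φ θ2')|hS.1.measurableSpace] =ᵐ[μ] Aᶜ.indicator (μ[φ θ2'|hS.1.measurableSpace]) :=
      condExp_indicator hint2 hAm.compl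
    have c5 : μ[φ θ1'|hS.1.measurableSpace] =ᵐ[μ] e1 := condExp_congr_ae hφ1
    have c6 : μ[φ θ2'|hS.1.measurableSpace] =ᵐ[μ] e2 := condExp_congr_ae hφ2
    filter_upwards [c1, c2, c3, c4, c5, c6] with ω h1 h2 h3 h4 h5 h6
    rw [h1, Pi.add_apply] at *
    rw [h2, h3, h4]
    by_cases hω : ω ∈ A
    · rw [Set.piecewise_eq_of_mem _ _ _ hω, Set.indicator_of_mem hω,
        Set.indicator_of_notMem (by simpa using hω), h5]
      ring
    · rw [Set.piecewise_eq_of_notMem _ _ _ hω, Set.indicator_of_notMem hω,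
        Set.indicator_of_mem (by simpa using hω), h6]
      ring
  refine ⟨θ3, ⟨hθ3, hSθ3⟩, ?_, ?_⟩
  · filter_upwards [hcond] with ω h
    rw [h]
    by_cases hω : ω ∈ A
    · rw [Set.piecewise_eq_of_mem _ _ _ hω]
    · rw [Set.piecewise_eq_of_notMem _ _ _ hω]
      exact le_of_not_ge hω
  · filter_upwards [hcond] with ω h
    rw [h]
    by_cases hω : ω ∈ A
    · rw [Set.piecewise_eq_of_mem _ _ _ hω]; exact hω
    · rw [Set.piecewise_eq_of_notMem _ _ _ hω]

/-- representation of `V S` with an attaining monotone sequence -/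
lemma V_rep [IsProbabilityMeasure μ] (hφ : Admissible 𝓕 T μ φ)
    (hZ : IsEssSupFam μ (MemT0 𝓕 T) φ Z) (hZint : Integrable Z μ) (hS : MemT0 𝓕 T S)
    (hVS : IsEssSupFam μ (fun θ => MemT0 𝓕 T θ ∧ S ≤ᵐ[μ] θ)
      (fun θ => μ[φ θ | hS.1.measurableSpace]) (V S)) :
    ∃ (v : Ω → ℝ) (θn : ℕ → Ω → ℝ), Measurable[hS.1.measurableSpace] v ∧ Integrable v μ ∧
      V S =ᵐ[μ] v ∧ (∀ n, MemT0 𝓕 T (θn n) ∧ S ≤ᵐ[μ] θn n) ∧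
      (∀ᵐ ω ∂μ, Filter.Tendsto (fun n => (μ[φ (θn n)|hS.1.measurableSpace]) ω)
        Filter.atTop (nhds (v ω))) ∧
      Filter.Tendsto (fun n => ∫ ω, φ (θn n) ω ∂μ) Filter.atTop (nhds (∫ ω, v ω ∂μ)) := by
  obtain ⟨v, s, hvm, hvi, hsP, hsmono, hslim, hsint, hsup⟩ :=
    exists_essSupFam_seq (μ := μ) hS.1.measurableSpace_le
      (fun θ => MemT0 𝓕 T θ ∧ S ≤ᵐ[μ] θ) (fun θ => μ[φ θ | hS.1.measurableSpace])
      (μ[Z | hS.1.measurableSpace]) stronglyMeasurable_condExp.measurable integrable_condExp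
      (fun i _ => integrable_condExp)
      (fun i _ => ⟨_, stronglyMeasurable_condExp.measurable, Filter.EventuallyEq.rfl⟩)
      (fun i hi => condExp_mono (phi_int hφ hZ hZint hi.1) hZint (hZ.1 i hi.1))
      ⟨S, hS, Filter.Eventually.of_forall fun ω => le_rfl⟩
      (cond_directed hφ hZ hZint hS)
  have hVv : V S =ᵐ[μ] v :=
    (hVS.2 v hsup.1).antisymm (hsup.2 (V S) hVS.1)
  refine ⟨v, s, hvm, hvi, hVv, hsP, hslim, ?_⟩
  have : ∀ n, ∫ ω, φ (s n) ω ∂μ = ∫ ω, (μ[φ (s n)|hS.1.measurableSpace]) ω ∂μ :=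
    fun n => (integral_condExp (μ := μ) (f := φ (s n)) hS.1.measurableSpace_le).symm
  simpa only [this] using hsint

lemma V_int [IsProbabilityMeasure μ] (hφ : Admissible 𝓕 T μ φ)
    (hZ : IsEssSupFam μ (MemT0 𝓕 T) φ Z) (hZint : Integrable Z μ) (hS : MemT0 𝓕 T S)
    (hVS : IsEssSupFam μ (fun θ => MemT0 𝓕 T θ ∧ S ≤ᵐ[μ] θ)
      (fun θ => μ[φ θ | hS.1.measurableSpace]) (V S)) : Integrable (V S) μ := by
  obtain ⟨v, s, hvm, hvi, hVv, _⟩ := V_rep hφ hZ hZint hS hVS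
  exact hvi.congr hVv.symm

lemma V_meas_version [IsProbabilityMeasure μ] (hφ : Admissible 𝓕 T μ φ)
    (hZ : IsEssSupFam μ (MemT0 𝓕 T) φ Z) (hZint : Integrable Z μ) (hS : MemT0 𝓕 T S)
    (hVS : IsEssSupFam μ (fun θ => MemT0 𝓕 T θ ∧ S ≤ᵐ[μ] θ)
      (fun θ => μ[φ θ | hS.1.measurableSpace]) (V S)) :
    ∃ v, StronglyMeasurable[hS.1.measurableSpace] v ∧ V S =ᵐ[μ] v := by
  obtain ⟨v, s, hvm, hvi, hVv, _⟩ := V_rep hφ hZ hZint hS hVS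
  exact ⟨v, hvm.stronglyMeasurable, hVv⟩

lemma V_ge_phi [IsProbabilityMeasure μ] (hφ : Admissible 𝓕 T μ φ)
    (hZ : IsEssSupFam μ (MemT0 𝓕 T) φ Z) (hZint : Integrable Z μ) (hS : MemT0 𝓕 T S)
    (hVS : IsEssSupFam μ (fun θ => MemT0 𝓕 T θ ∧ S ≤ᵐ[μ] θ)
      (fun θ => μ[φ θ | hS.1.measurableSpace]) (V S)) : φ S ≤ᵐ[μ] V S := by
  have h : μ[φ S|hS.1.measurableSpace] ≤ᵐ[μ] V S :=
    hVS.1 S ⟨hS, Filter.Eventually.of_forall fun ω => le_rfl⟩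
  rwa [condexp_phi_self hφ hZ hZint hS] at h

lemma V_nonneg [IsProbabilityMeasure μ] (hφ : Admissible 𝓕 T μ φ)
    (hZ : IsEssSupFam μ (MemT0 𝓕 T) φ Z) (hZint : Integrable Z μ) (hS : MemT0 𝓕 T S)
    (hVS : IsEssSupFam μ (fun θ => MemT0 𝓕 T θ ∧ S ≤ᵐ[μ] θ)
      (fun θ => μ[φ θ | hS.1.measurableSpace]) (V S)) : (0 : Ω → ℝ) ≤ᵐ[μ] V S := by
  filter_upwards [V_ge_phi hφ hZ hZint hS hVS] with ω h
  exact le_trans ((hφ.1 S hS).2 ω) h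

lemma V_le_condZ [IsProbabilityMeasure μ] (hφ : Admissible 𝓕 T μ φ)
    (hZ : IsEssSupFam μ (MemT0 𝓕 T) φ Z) (hZint : Integrable Z μ) (hS : MemT0 𝓕 T S)
    (hVS : IsEssSupFam μ (fun θ => MemT0 𝓕 T θ ∧ S ≤ᵐ[μ] θ)
      (fun θ => μ[φ θ | hS.1.measurableSpace]) (V S)) :
    V S ≤ᵐ[μ] μ[Z | hS.1.measurableSpace] :=
  hVS.2 _ fun θ hθ => condExp_mono (phi_int hφ hZ hZint hθ.1) hZint (hZ.1 θ hθ.1)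

lemma V_congr_ae [IsProbabilityMeasure μ]
    (hFnull : ∀ A : Set Ω, μ A = 0 → MeasurableSet[𝓕 0] A)
    (hV : ∀ S (hS : MemT0 𝓕 T S),
      IsEssSupFam μ (fun θ => MemT0 𝓕 T θ ∧ S ≤ᵐ[μ] θ)
        (fun θ => μ[φ θ | hS.1.measurableSpace]) (V S))
    {τ τ' : Ω → ℝ} (hτ : MemT0 𝓕 T τ) (hτ' : MemT0 𝓕 T τ') (h : τ =ᵐ[μ] τ') :
    V τ =ᵐ[μ] V τ' := by
  have hms : hτ.1.measurableSpace = hτ'.1.measurableSpace :=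
    stoppingTime_measurableSpace_congr_ae hFnull hτ hτ' h
  have h12 : V τ ≤ᵐ[μ] V τ' := by
    refine (hV τ hτ).2 (V τ') fun θ hθ => ?_
    show μ[φ θ|hτ.1.measurableSpace] ≤ᵐ[μ] V τ'
    rw [hms]
    exact (hV τ' hτ').1 θ ⟨hθ.1, h.symm.le.trans hθ.2⟩
  have h21 : V τ' ≤ᵐ[μ] V τ := by
    refine (hV τ' hτ').2 (V τ) fun θ hθ => ?_
    show μ[φ θ|hτ'.1.measurableSpace] ≤ᵐ[μ] V τ
    rw [← hms]
    exact (hV τ hτ).1 θ ⟨hθ.1, h.le.trans hθ.2⟩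
  exact h12.antisymm h21

end Vfam
section Vloc

variable {m0 : MeasurableSpace Ω} {μ : Measure Ω} {𝓕 : Filtration ℝ m0} {T : ℝ}
  {φ : (Ω → ℝ) → Ω → ℝ} {Z : Ω → ℝ} {V : (Ω → ℝ) → Ω → ℝ}

/-- the supermartingale property of the value family -/
lemma V_superm [IsProbabilityMeasure μ]
    (hFnull : ∀ A : Set Ω, μ A = 0 → MeasurableSet[𝓕 0] A)
    (hφ : Admissible 𝓕 T μ φ) (hZ : IsEssSupFam μ (MemT0 𝓕 T) φ Z) (hZint : Integrable Z μ)
    (hV : ∀ S (hS : MemT0 𝓕 T S),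
      IsEssSupFam μ (fun θ => MemT0 𝓕 T θ ∧ S ≤ᵐ[μ] θ)
        (fun θ => μ[φ θ | hS.1.measurableSpace]) (V S))
    {S S' : Ω → ℝ} (hS : MemT0 𝓕 T S) (hS' : MemT0 𝓕 T S') (hle : S ≤ᵐ[μ] S') :
    μ[V S' | hS.1.measurableSpace] ≤ᵐ[μ] V S := by
  classical
  set S'' : Ω → ℝ := fun ω => max (S' ω) (S ω) with hS''def
  have hS'' : MemT0 𝓕 T S'' := hS'.max hS
  have hS''e : S'' =ᵐ[μ] S' := by
    filter_upwards [hle] with ω h using max_eq_left h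
  have hVe : V S'' =ᵐ[μ] V S' := V_congr_ae hFnull hV hS'' hS' hS''e
  have hmono_m : hS.1.measurableSpace ≤ hS''.1.measurableSpace :=
    IsStoppingTime.measurableSpace_mono hS.1 hS''.1 fun ω => WithTop.coe_le_coe.2 (le_max_right _ _)
  obtain ⟨v'', θn, hv''m, hv''i, hV''v, hθnP, hθnlim, _⟩ :=
    V_rep hφ hZ hZint hS'' (hV S'' hS'')
  obtain ⟨vS, hvSm, hVSe⟩ := V_meas_version hφ hZ hZint hS (hV S hS)
  have hVS'int : Integrable (V S') μ := V_int hφ hZ hZint hS' (hV S' hS')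
  have hvSi : Integrable vS μ := (V_int hφ hZ hZint hS (hV S hS)).congr hVSe
  have hchain : V S' =ᵐ[μ] v'' := hVe.symm.trans hV''v
  have key : ∀ A, MeasurableSet[hS.1.measurableSpace] A →
      ∫ ω in A, (μ[V S' | hS.1.measurableSpace]) ω ∂μ ≤ ∫ ω in A, vS ω ∂μ := by
    intro A hA
    have hA'' : MeasurableSet[hS''.1.measurableSpace] A := hmono_m A hA
    have e1 : ∫ ω in A, (μ[V S' | hS.1.measurableSpace]) ω ∂μ = ∫ ω in A, V S' ω ∂μ :=
      setIntegral_condExp hS.1.measurableSpace_le hVS'int hA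
    have e2 : ∫ ω in A, V S' ω ∂μ = ∫ ω in A, v'' ω ∂μ :=
      integral_congr_ae (ae_restrict_of_ae hchain)
    -- dominated convergence on A
    have hbnd : ∀ n, ∀ᵐ ω ∂(μ.restrict A),
        ‖(μ[φ (θn n)|hS''.1.measurableSpace]) ω‖ ≤ |(μ[Z|hS''.1.measurableSpace]) ω| := by
      intro n
      refine ae_restrict_of_ae ?_
      filter_upwards [condExp_nonneg (μ := μ) (m := hS''.1.measurableSpace)
          (Filter.Eventually.of_forall fun ω => (hφ.1 _ (hθnP n).1).2 ω),
        condExp_mono (phi_int hφ hZ hZint (hθnP n).1) hZint (hZ.1 _ (hθnP n).1)]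
        with ω h1 h2
      rw [Real.norm_eq_abs, abs_of_nonneg h1]
      exact le_trans h2 (le_abs_self _)
    have e3 : Filter.Tendsto (fun n => ∫ ω in A, (μ[φ (θn n)|hS''.1.measurableSpace]) ω ∂μ)
        Filter.atTop (nhds (∫ ω in A, v'' ω ∂μ)) := by
      refine MeasureTheory.tendsto_integral_of_dominated_convergence _
        (fun n => integrable_condExp.aestronglyMeasurable.restrict)
        (integrable_condExp.abs.restrict) hbnd ?_
      exact ae_restrict_of_ae hθnlim
    have e4 : ∀ n, ∫ ω in A, (μ[φ (θn n)|hS''.1.measurableSpace]) ω ∂μ ≤ ∫ ω in A, vS ω ∂μ := by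
      intro n
      have g1 : ∫ ω in A, (μ[φ (θn n)|hS''.1.measurableSpace]) ω ∂μ = ∫ ω in A, φ (θn n) ω ∂μ :=
        setIntegral_condExp hS''.1.measurableSpace_le (phi_int hφ hZ hZint (hθnP n).1) hA''
      have g2 : ∫ ω in A, φ (θn n) ω ∂μ = ∫ ω in A, (μ[φ (θn n)|hS.1.measurableSpace]) ω ∂μ :=
        (setIntegral_condExp hS.1.measurableSpace_le (phi_int hφ hZ hZint (hθnP n).1) hA).symm
      have hmember : μ[φ (θn n)|hS.1.measurableSpace] ≤ᵐ[μ] vS := by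
        have hS'S'' : S' ≤ᵐ[μ] S'' :=
          Filter.Eventually.of_forall fun ω => le_max_left (S' ω) (S ω)
        have h1 : μ[φ (θn n)|hS.1.measurableSpace] ≤ᵐ[μ] V S :=
          (hV S hS).1 (θn n) ⟨(hθnP n).1, hle.trans (hS'S''.trans (hθnP n).2)⟩
        exact h1.trans hVSe.le
      have g3 : ∫ ω in A, (μ[φ (θn n)|hS.1.measurableSpace]) ω ∂μ ≤ ∫ ω in A, vS ω ∂μ :=
        integral_mono_ae integrable_condExp.restrict hvSi.restrict
          (ae_restrict_of_ae hmember)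
      rw [g1, g2]
      exact g3
    rw [e1, e2]
    exact le_of_tendsto' e3 e4
  have hfin : μ[V S' | hS.1.measurableSpace] ≤ᵐ[μ] vS :=
    ae_le_of_forall_setIntegral_le_subalg hS.1.measurableSpace_le integrable_condExp hvSi
      stronglyMeasurable_condExp hvSm key
  exact hfin.trans hVSe.symm.le

lemma int_V_mono [IsProbabilityMeasure μ]
    (hFnull : ∀ A : Set Ω, μ A = 0 → MeasurableSet[𝓕 0] A)
    (hφ : Admissible 𝓕 T μ φ) (hZ : IsEssSupFam μ (MemT0 𝓕 T) φ Z) (hZint : Integrable Z μ)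
    (hV : ∀ S (hS : MemT0 𝓕 T S),
      IsEssSupFam μ (fun θ => MemT0 𝓕 T θ ∧ S ≤ᵐ[μ] θ)
        (fun θ => μ[φ θ | hS.1.measurableSpace]) (V S))
    {S S' : Ω → ℝ} (hS : MemT0 𝓕 T S) (hS' : MemT0 𝓕 T S') (hle : S ≤ᵐ[μ] S') :
    ∫ ω, V S' ω ∂μ ≤ ∫ ω, V S ω ∂μ := by
  have h := V_superm hFnull hφ hZ hZint hV hS hS' hle
  have e : ∫ ω, (μ[V S'|hS.1.measurableSpace]) ω ∂μ = ∫ ω, V S' ω ∂μ :=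
    integral_condExp hS.1.measurableSpace_le
  rw [← e]
  exact integral_mono_ae integrable_condExp (V_int hφ hZ hZint hS (hV S hS)) h

/-- localization of the value family: on `{τ ≤ σ}`, `V (τ ∧ σ) = V τ` a.e. -/
lemma V_loc [IsProbabilityMeasure μ]
    (hFnull : ∀ A : Set Ω, μ A = 0 → MeasurableSet[𝓕 0] A)
    (hφ : Admissible 𝓕 T μ φ) (hZ : IsEssSupFam μ (MemT0 𝓕 T) φ Z) (hZint : Integrable Z μ)
    (hV : ∀ S (hS : MemT0 𝓕 T S),
      IsEssSupFam μ (fun θ => MemT0 𝓕 T θ ∧ S ≤ᵐ[μ] θ)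
        (fun θ => μ[φ θ | hS.1.measurableSpace]) (V S))
    {τ σ : Ω → ℝ} (hτ : MemT0 𝓕 T τ) (hσ : MemT0 𝓕 T σ) :
    ∀ᵐ ω ∂μ, τ ω ≤ σ ω → V (fun ω' => min (τ ω') (σ ω')) ω = V τ ω := by
  classical
  set ρ : Ω → ℝ := fun ω => min (τ ω) (σ ω) with hρdef
  have hρ : MemT0 𝓕 T ρ := hτ.min hσ
  set A : Set Ω := {ω | τ ω ≤ σ ω} with hAdef
  have hA0 : MeasurableSet[m0] A :=
    measurableSet_le (hτ.measurable) (hσ.measurable)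
  have hAτ : MeasurableSet[hτ.1.measurableSpace] A := by
    rw [hAdef]
    have := IsStoppingTime.measurableSet_le_stopping_time hτ.1 hσ.1
    simpa only [WithTop.coe_le_coe] using this
  have hAσ : MeasurableSet[hσ.1.measurableSpace] A := by
    rw [hAdef]
    have := IsStoppingTime.measurableSet_stopping_time_le hτ.1 hσ.1
    simpa only [WithTop.coe_le_coe] using this
  have hAρ : MeasurableSet[hρ.1.measurableSpace] A :=
    (IsStoppingTime.measurableSet_min_iff hτ.1 hσ.1 A).mpr ⟨hAτ, hAσ⟩
  have hρτ : ∀ ω, ρ ω ≤ τ ω := fun ω => min_le_left _ _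
  have hρσ : ∀ ω, ρ ω ≤ σ ω := fun ω => min_le_right _ _
  -- conditional expectations agree on A
  have hCL : ∀ (f : Ω → ℝ), ∀ᵐ ω ∂μ, ω ∈ A →
      (μ[f|hρ.1.measurableSpace]) ω = (μ[f|hτ.1.measurableSpace]) ω := by
    intro f
    have h := condExp_min_stopping_time_ae_eq_restrict_le (μ := μ) (f := f) hτ.1 hσ.1
    filter_upwards [ae_imp_of_ae_restrict h] with ω hω hωA
    exact hω (WithTop.coe_le_coe.2 hωA)
  -- direction 1 : V ρ ≤ A.piecewise (V τ) (V ρ)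
  have claim1 : V ρ ≤ᵐ[μ] A.piecewise (V τ) (V ρ) := by
    refine (hV ρ hρ).2 _ fun θ hθ => ?_
    show μ[φ θ|hρ.1.measurableSpace] ≤ᵐ[μ] A.piecewise (V τ) (V ρ)
    obtain ⟨hθm, hρθ⟩ := hθ
    set θ₂ : Ω → ℝ := A.piecewise (fun ω => max (θ ω) (τ ω)) τ with hθ₂def
    have hθ₂ : MemT0 𝓕 T θ₂ :=
      memT0_piecewise hρ (hθm.max hτ) hτ hAρ
        (fun ω => le_trans (hρτ ω) (le_max_right _ _)) hρτ
    have hτθ₂ : τ ≤ᵐ[μ] θ₂ := by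
      refine Filter.Eventually.of_forall fun ω => ?_
      by_cases hω : ω ∈ A
      · rw [hθ₂def, Set.piecewise_eq_of_mem _ _ _ hω]; exact le_max_right _ _
      · rw [hθ₂def, Set.piecewise_eq_of_notMem _ _ _ hω]
    have hmember : μ[φ θ₂|hτ.1.measurableSpace] ≤ᵐ[μ] V τ := (hV τ hτ).1 θ₂ ⟨hθ₂, hτθ₂⟩
    have hmemberρ : μ[φ θ|hρ.1.measurableSpace] ≤ᵐ[μ] V ρ := (hV ρ hρ).1 θ ⟨hθm, hρθ⟩
    have hind1 : A.indicator (φ θ) =ᵐ[μ] A.indicator (φ θ₂) := by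
      filter_upwards [hφ.2 θ θ₂ hθm hθ₂, hρθ] with ω h1 h2
      by_cases hω : ω ∈ A
      · rw [Set.indicator_of_mem hω, Set.indicator_of_mem hω]
        refine h1 ?_
        rw [hθ₂def, Set.piecewise_eq_of_mem _ _ _ hω]
        have hτω : τ ω ≤ θ ω := by
          have : ρ ω = τ ω := min_eq_left hω
          rw [← this]; exact h2
        exact (max_eq_left hτω).symm
      · rw [Set.indicator_of_notMem hω, Set.indicator_of_notMem hω]
    have c1 : A.indicator (μ[φ θ|hρ.1.measurableSpace]) =ᵐ[μ]
        A.indicator (μ[φ θ₂|hρ.1.measurableSpace]) := by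
      calc A.indicator (μ[φ θ|hρ.1.measurableSpace])
          =ᵐ[μ] μ[A.indicator (φ θ)|hρ.1.measurableSpace] :=
            (condExp_indicator (phi_int hφ hZ hZint hθm) hAρ).symm
        _ =ᵐ[μ] μ[A.indicator (φ θ₂)|hρ.1.measurableSpace] := condExp_congr_ae hind1
        _ =ᵐ[μ] A.indicator (μ[φ θ₂|hρ.1.measurableSpace]) :=
            condExp_indicator (phi_int hφ hZ hZint hθ₂) hAρ
    filter_upwards [c1, hCL (φ θ₂), hmember, hmemberρ] with ω h1 h2 h3 h4
    by_cases hω : ω ∈ A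
    · rw [Set.piecewise_eq_of_mem _ _ _ hω]
      have e1 : (μ[φ θ|hρ.1.measurableSpace]) ω = (μ[φ θ₂|hρ.1.measurableSpace]) ω := by
        have := h1
        rwa [Set.indicator_of_mem hω, Set.indicator_of_mem hω] at this
      rw [e1, h2 hω]
      exact h3
    · rw [Set.piecewise_eq_of_notMem _ _ _ hω]
      exact h4
  -- direction 2 : V τ ≤ A.piecewise (V ρ) (V τ)
  have claim2 : V τ ≤ᵐ[μ] A.piecewise (V ρ) (V τ) := by
    refine (hV τ hτ).2 _ fun θ hθ => ?_
    show μ[φ θ|hτ.1.measurableSpace] ≤ᵐ[μ] A.piecewise (V ρ) (V τ)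
    obtain ⟨hθm, hτθ⟩ := hθ
    set θ₃ : Ω → ℝ := A.piecewise (fun ω => max (θ ω) (τ ω)) σ with hθ₃def
    have hθ₃ : MemT0 𝓕 T θ₃ :=
      memT0_piecewise hρ (hθm.max hτ) hσ hAρ
        (fun ω => le_trans (hρτ ω) (le_max_right _ _)) hρσ
    have hρθ₃ : ρ ≤ᵐ[μ] θ₃ := by
      refine Filter.Eventually.of_forall fun ω => ?_
      by_cases hω : ω ∈ A
      · rw [hθ₃def, Set.piecewise_eq_of_mem _ _ _ hω]
        exact le_trans (hρτ ω) (le_max_right _ _)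
      · rw [hθ₃def, Set.piecewise_eq_of_notMem _ _ _ hω]; exact hρσ ω
    have hmember3 : μ[φ θ₃|hρ.1.measurableSpace] ≤ᵐ[μ] V ρ := (hV ρ hρ).1 θ₃ ⟨hθ₃, hρθ₃⟩
    have hmemberτ : μ[φ θ|hτ.1.measurableSpace] ≤ᵐ[μ] V τ := (hV τ hτ).1 θ ⟨hθm, hτθ⟩
    have hind3 : A.indicator (φ θ) =ᵐ[μ] A.indicator (φ θ₃) := by
      filter_upwards [hφ.2 θ θ₃ hθm hθ₃, hτθ] with ω h1 h2
      by_cases hω : ω ∈ A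
      · rw [Set.indicator_of_mem hω, Set.indicator_of_mem hω]
        refine h1 ?_
        rw [hθ₃def, Set.piecewise_eq_of_mem _ _ _ hω]
        exact (max_eq_left h2).symm
      · rw [Set.indicator_of_notMem hω, Set.indicator_of_notMem hω]
    have c1 : A.indicator (μ[φ θ|hτ.1.measurableSpace]) =ᵐ[μ]
        A.indicator (μ[φ θ₃|hτ.1.measurableSpace]) := by
      calc A.indicator (μ[φ θ|hτ.1.measurableSpace])
          =ᵐ[μ] μ[A.indicator (φ θ)|hτ.1.measurableSpace] :=
            (condExp_indicator (phi_int hφ hZ hZint hθm) hAτ).symm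
        _ =ᵐ[μ] μ[A.indicator (φ θ₃)|hτ.1.measurableSpace] := condExp_congr_ae hind3
        _ =ᵐ[μ] A.indicator (μ[φ θ₃|hτ.1.measurableSpace]) :=
            condExp_indicator (phi_int hφ hZ hZint hθ₃) hAτ
    filter_upwards [c1, hCL (φ θ₃), hmember3, hmemberτ] with ω h1 h2 h3 h4
    by_cases hω : ω ∈ A
    · rw [Set.piecewise_eq_of_mem _ _ _ hω]
      have e1 : (μ[φ θ|hτ.1.measurableSpace]) ω = (μ[φ θ₃|hτ.1.measurableSpace]) ω := by
        have := h1
        rwa [Set.indicator_of_mem hω, Set.indicator_of_mem hω] at this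
      rw [e1, ← h2 hω]
      exact h3
    · rw [Set.piecewise_eq_of_notMem _ _ _ hω]
      exact h4
  filter_upwards [claim1, claim2] with ω h1 h2 hτσ
  have hω : ω ∈ A := hτσ
  rw [Set.piecewise_eq_of_mem _ _ _ hω] at h1
  rw [Set.piecewise_eq_of_mem _ _ _ hω] at h2
  exact le_antisymm h1 h2

/-- `V` is admissible on coincidence events -/
lemma V_eq_on_eq [IsProbabilityMeasure μ]
    (hFnull : ∀ A : Set Ω, μ A = 0 → MeasurableSet[𝓕 0] A)
    (hφ : Admissible 𝓕 T μ φ) (hZ : IsEssSupFam μ (MemT0 𝓕 T) φ Z) (hZint : Integrable Z μ)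
    (hV : ∀ S (hS : MemT0 𝓕 T S),
      IsEssSupFam μ (fun θ => MemT0 𝓕 T θ ∧ S ≤ᵐ[μ] θ)
        (fun θ => μ[φ θ | hS.1.measurableSpace]) (V S))
    {τ σ : Ω → ℝ} (hτ : MemT0 𝓕 T τ) (hσ : MemT0 𝓕 T σ) :
    ∀ᵐ ω ∂μ, τ ω = σ ω → V τ ω = V σ ω := by
  have h1 := V_loc hFnull hφ hZ hZint hV hτ hσ
  have h2 := V_loc hFnull hφ hZ hZint hV hσ hτ
  have hfun : (fun ω => min (σ ω) (τ ω)) = (fun ω => min (τ ω) (σ ω)) :=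
    funext fun ω => min_comm _ _
  rw [hfun] at h2
  filter_upwards [h1, h2] with ω g1 g2 heq
  rw [← g1 (le_of_eq heq), ← g2 (ge_of_eq heq)]

end Vloc
section Vrce

variable {m0 : MeasurableSpace Ω} {μ : Measure Ω} {𝓕 : Filtration ℝ m0} {T : ℝ}
  {φ : (Ω → ℝ) → Ω → ℝ} {Z : Ω → ℝ} {V : (Ω → ℝ) → Ω → ℝ}

lemma int_phi_le_int_V [IsProbabilityMeasure μ]
    (hφ : Admissible 𝓕 T μ φ) (hZ : IsEssSupFam μ (MemT0 𝓕 T) φ Z) (hZint : Integrable Z μ)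
    {S θ : Ω → ℝ} (hS : MemT0 𝓕 T S)
    (hVS : IsEssSupFam μ (fun θ => MemT0 𝓕 T θ ∧ S ≤ᵐ[μ] θ)
      (fun θ => μ[φ θ | hS.1.measurableSpace]) (V S))
    (hθ : MemT0 𝓕 T θ) (hSθ : S ≤ᵐ[μ] θ) :
    ∫ ω, φ θ ω ∂μ ≤ ∫ ω, V S ω ∂μ := by
  have h : μ[φ θ|hS.1.measurableSpace] ≤ᵐ[μ] V S := hVS.1 θ ⟨hθ, hSθ⟩
  calc ∫ ω, φ θ ω ∂μ = ∫ ω, (μ[φ θ|hS.1.measurableSpace]) ω ∂μ :=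
        (integral_condExp hS.1.measurableSpace_le).symm
    _ ≤ ∫ ω, V S ω ∂μ :=
        integral_mono_ae integrable_condExp (V_int hφ hZ hZint hS hVS) h

/-- `S ↦ E[V(S)]` is right continuous along stopping times -/
lemma int_V_rce [IsProbabilityMeasure μ]
    (hFnull : ∀ A : Set Ω, μ A = 0 → MeasurableSet[𝓕 0] A)
    (hφ : Admissible 𝓕 T μ φ) (hZ : IsEssSupFam μ (MemT0 𝓕 T) φ Z) (hZint : Integrable Z μ)
    (hφrc : RCE 𝓕 T μ φ)
    (hV : ∀ S (hS : MemT0 𝓕 T S),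
      IsEssSupFam μ (fun θ => MemT0 𝓕 T θ ∧ S ≤ᵐ[μ] θ)
        (fun θ => μ[φ θ | hS.1.measurableSpace]) (V S))
    {θ : Ω → ℝ} {θn : ℕ → Ω → ℝ} (hθ : MemT0 𝓕 T θ) (hθn : ∀ n, MemT0 𝓕 T (θn n))
    (hdown : DownAS μ θn θ) :
    Filter.Tendsto (fun n => ∫ ω, V (θn n) ω ∂μ) Filter.atTop (nhds (∫ ω, V θ ω ∂μ)) := by
  set u : ℕ → ℝ := fun n => ∫ ω, V (θn n) ω ∂μ with hu
  have hgeq : ∀ n, θ ≤ᵐ[μ] θn n := by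
    intro n
    filter_upwards [hdown] with ω ⟨hanti, hlim⟩
    refine le_of_tendsto hlim ?_
    refine Filter.eventually_atTop.mpr ⟨n, fun m hm => ?_⟩
    exact antitone_nat_of_succ_le (f := fun m => θn m ω) hanti hm
  have h1 : ∀ n, u n ≤ ∫ ω, V θ ω ∂μ := fun n =>
    int_V_mono hFnull hφ hZ hZint hV hθ (hθn n) (hgeq n)
  have h2 : Monotone u := by
    refine monotone_nat_of_le_succ fun n => ?_
    exact int_V_mono hFnull hφ hZ hZint hV (hθn (n+1)) (hθn n)
      (by filter_upwards [hdown] with ω ⟨hanti, _⟩ using hanti n)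
  have hbdd : BddAbove (Set.range u) := ⟨∫ ω, V θ ω ∂μ, by rintro x ⟨n, rfl⟩; exact h1 n⟩
  set L : ℝ := ⨆ n, u n with hL
  have huL : Filter.Tendsto u Filter.atTop (nhds L) := tendsto_atTop_ciSup h2 hbdd
  have hLle : L ≤ ∫ ω, V θ ω ∂μ := ciSup_le h1
  obtain ⟨v, η, hvm, hvi, hVv, hηP, hηlim, hηint⟩ := V_rep hφ hZ hZint hθ (hV θ hθ)
  have hphile : ∀ k, ∫ ω, φ (η k) ω ∂μ ≤ L := by
    intro k
    have hτmem : ∀ n, MemT0 𝓕 T (fun ω => max (η k ω) (θn n ω)) :=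
      fun n => (hηP k).1.max (hθn n)
    have hτdown : DownAS μ (fun n => fun ω => max (η k ω) (θn n ω)) (η k) := by
      filter_upwards [hdown, (hηP k).2] with ω ⟨hanti, hlim⟩ hθη
      constructor
      · intro n; exact max_le_max le_rfl (hanti n)
      · have h := (tendsto_const_nhds (x := η k ω)).max hlim
        rwa [max_eq_left hθη] at h
    have hrce := hφrc (η k) (hηP k).1 _ hτmem hτdown
    refine le_of_tendsto hrce ?_
    refine Filter.Eventually.of_forall fun n => ?_
    have hle1 : ∫ ω, φ (fun ω' => max (η k ω') (θn n ω')) ω ∂μ ≤ u n :=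
      int_phi_le_int_V hφ hZ hZint (hθn n) (hV _ (hθn n)) (hτmem n)
        (Filter.Eventually.of_forall fun ω => le_max_right _ _)
    exact hle1.trans (le_ciSup hbdd n)
  have hback : ∫ ω, V θ ω ∂μ ≤ L := by
    have hIv : ∫ ω, V θ ω ∂μ = ∫ ω, v ω ∂μ := integral_congr_ae hVv
    rw [hIv]
    exact le_of_tendsto hηint (Filter.Eventually.of_forall fun k => hphile k)
  have hfin : L = ∫ ω, V θ ω ∂μ := le_antisymm hLle hback
  rwa [hfin] at huL

lemma V_const_T [IsProbabilityMeasure μ] (hT : 0 ≤ T)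
    (hφ : Admissible 𝓕 T μ φ) (hZ : IsEssSupFam μ (MemT0 𝓕 T) φ Z) (hZint : Integrable Z μ)
    (hV : ∀ S (hS : MemT0 𝓕 T S),
      IsEssSupFam μ (fun θ => MemT0 𝓕 T θ ∧ S ≤ᵐ[μ] θ)
        (fun θ => μ[φ θ | hS.1.measurableSpace]) (V S)) :
    V (fun _ => T) =ᵐ[μ] φ (fun _ => T) := by
  have hcT : MemT0 𝓕 T (fun _ => T) := memT0_const hT ⟨hT, le_rfl⟩
  have h1 : φ (fun _ => T) ≤ᵐ[μ] V (fun _ => T) := V_ge_phi hφ hZ hZint hcT (hV _ hcT)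
  have h2 : V (fun _ => T) ≤ᵐ[μ] φ (fun _ => T) := by
    refine (hV _ hcT).2 _ fun θ hθ => ?_
    show μ[φ θ|hcT.1.measurableSpace] ≤ᵐ[μ] φ (fun _ => T)
    have he : θ =ᵐ[μ] (fun _ => T) := by
      filter_upwards [hθ.2] with ω h
      exact le_antisymm (hθ.1.le_T ω) h
    have hφe : φ θ =ᵐ[μ] φ (fun _ => T) := by
      filter_upwards [hφ.2 θ _ hθ.1 hcT, he] with ω a b using a b
    have hc := condExp_congr_ae (μ := μ) (m := hcT.1.measurableSpace) hφe
    rw [condexp_phi_self hφ hZ hZint hcT] at hc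
    exact hc.le
  exact h2.antisymm h1

end Vrce
section ThetaLambda

variable {m0 : MeasurableSpace Ω} {μ : Measure Ω} {𝓕 : Filtration ℝ m0} {T : ℝ}
  {φ : (Ω → ℝ) → Ω → ℝ} {Z : Ω → ℝ} {V : (Ω → ℝ) → Ω → ℝ}

/-- existence of the `λ`-penalized minimal stopping time `θ^λ(S)`, which moreover
belongs to the penalized set. -/
lemma exists_theta_lambda [IsProbabilityMeasure μ] (hT : 0 ≤ T)
    (hFright : ∀ t : ℝ, 𝓕 t = ⨅ s ∈ Set.Ioi t, 𝓕 s)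
    (hFnull : ∀ A : Set Ω, μ A = 0 → MeasurableSet[𝓕 0] A)
    (hφ : Admissible 𝓕 T μ φ) (hZ : IsEssSupFam μ (MemT0 𝓕 T) φ Z) (hZint : Integrable Z μ)
    (hφrc : RCE 𝓕 T μ φ)
    (hV : ∀ S (hS : MemT0 𝓕 T S),
      IsEssSupFam μ (fun θ => MemT0 𝓕 T θ ∧ S ≤ᵐ[μ] θ)
        (fun θ => μ[φ θ | hS.1.measurableSpace]) (V S))
    {S : Ω → ℝ} (hS : MemT0 𝓕 T S) {lam : ℝ} (hlam0 : 0 ≤ lam) (hlam1 : lam ≤ 1) :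
    ∃ θl : Ω → ℝ, MemT0 𝓕 T θl ∧ (S ≤ᵐ[μ] θl) ∧ (∀ᵐ ω ∂μ, lam * V θl ω ≤ φ θl ω) ∧
      (∀ η, MemT0 𝓕 T η → S ≤ᵐ[μ] η → (∀ᵐ ω ∂μ, lam * V η ω ≤ φ η ω) → θl ≤ᵐ[μ] η) := by
  classical
  set Q : (Ω → ℝ) → Prop := fun η =>
    MemT0 𝓕 T η ∧ S ≤ᵐ[μ] η ∧ ∀ᵐ ω ∂μ, lam * V η ω ≤ φ η ω with hQdef
  -- nonempty : the constant T belongs to Q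
  have hcT : MemT0 𝓕 T (fun _ => T) := memT0_const hT ⟨hT, le_rfl⟩
  have hne : ∃ η, Q η := by
    refine ⟨fun _ => T, hcT, Filter.Eventually.of_forall fun ω => hS.le_T ω, ?_⟩
    filter_upwards [V_const_T hT hφ hZ hZint hV,
      V_nonneg hφ hZ hZint hcT (hV _ hcT)] with ω h hv
    calc lam * V (fun _ => T) ω ≤ 1 * V (fun _ => T) ω :=
          mul_le_mul_of_nonneg_right hlam1 hv
      _ = V (fun _ => T) ω := one_mul _
      _ = φ (fun _ => T) ω := h
  -- closed under pointwise min
  have hmin : ∀ θ θ', Q θ → Q θ' → Q (fun ω => min (θ ω) (θ' ω)) := by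
    intro θ θ' hQθ hQθ'
    refine ⟨hQθ.1.min hQθ'.1, ?_, ?_⟩
    · filter_upwards [hQθ.2.1, hQθ'.2.1] with ω h1 h2
      exact le_min h1 h2
    · have hl1 := V_loc hFnull hφ hZ hZint hV hQθ.1 hQθ'.1
      have hl2 := V_loc hFnull hφ hZ hZint hV hQθ'.1 hQθ.1
      have hfun : (fun ω => min (θ' ω) (θ ω)) = (fun ω => min (θ ω) (θ' ω)) :=
        funext fun ω => min_comm _ _
      rw [hfun] at hl2
      have hmm : MemT0 𝓕 T (fun ω => min (θ ω) (θ' ω)) := hQθ.1.min hQθ'.1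
      filter_upwards [hl1, hl2, hφ.2 _ θ hmm hQθ.1, hφ.2 _ θ' hmm hQθ'.1,
        hQθ.2.2, hQθ'.2.2] with ω l1 l2 p1 p2 q1 q2
      rcases le_total (θ ω) (θ' ω) with h | h
      · rw [l1 h, p1 (min_eq_left h)]
        exact q1
      · rw [l2 h, p2 (min_eq_right h)]
        exact q2
  obtain ⟨θl, sn, hθl, hsnQ, hsnanti, hsnlim, hinf⟩ :=
    exists_essInf_stopping (μ := μ) hFright Q (fun η h => h.1) hne hmin
  have hθl_le : ∀ n ω, θl ω ≤ sn n ω := by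
    intro n ω
    refine le_of_tendsto (hsnlim ω) ?_
    refine Filter.eventually_atTop.mpr ⟨n, fun m hm => ?_⟩
    exact antitone_nat_of_succ_le (f := fun m => sn m ω) (fun k => hsnanti k ω) hm
  have hSθl : S ≤ᵐ[μ] θl := by
    have h := ae_all_iff.mpr fun n => (hsnQ n).2.1
    filter_upwards [h] with ω hall
    exact ge_of_tendsto (hsnlim ω) (Filter.Eventually.of_forall fun n => hall n)
  -- membership of θl in Q : integral test over F_{θl}-sets
  have key : ∀ A, MeasurableSet[hθl.1.measurableSpace] A →
      ∫ ω in A, (lam * V θl ω) ∂μ ≤ ∫ ω in A, φ θl ω ∂μ := by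
    intro A hA
    have hA0 : MeasurableSet[m0] A := hθl.1.measurableSpace_le A hA
    set σ : ℕ → Ω → ℝ := fun n => A.piecewise (sn n) θl with hσdef
    have hσ : ∀ n, MemT0 𝓕 T (σ n) := fun n =>
      memT0_piecewise hθl (hsnQ n).1 hθl hA (fun ω => hθl_le n ω) (fun ω => le_rfl)
    have hσdown : DownAS μ σ θl := by
      refine Filter.Eventually.of_forall fun ω => ?_
      by_cases hω : ω ∈ A
      · constructor
        · intro n
          rw [hσdef]
          simp only [Set.piecewise_eq_of_mem _ _ _ hω]
          exact hsnanti n ω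
        · have := hsnlim ω
          convert this using 2 with n
          rw [hσdef]
          simp only [Set.piecewise_eq_of_mem _ _ _ hω]
      · constructor
        · intro n
          rw [hσdef]
          simp only [Set.piecewise_eq_of_notMem _ _ _ hω]
          exact le_rfl
        · have : (fun n => σ n ω) = fun _ => θl ω := by
            funext n
            rw [hσdef]
            simp only [Set.piecewise_eq_of_notMem _ _ _ hω]
          rw [this]
          exact tendsto_const_nhds
    have hrce := hφrc θl hθl σ hσ hσdown
    have hVrce := int_V_rce hFnull hφ hZ hZint hφrc hV hθl hσ hσdown
    -- decompositions
    have hdecn : ∀ n, ∫ ω, φ (σ n) ω ∂μ =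
        ∫ ω in A, φ (sn n) ω ∂μ + ∫ ω in Aᶜ, φ θl ω ∂μ := by
      intro n
      have hae : φ (σ n) =ᵐ[μ]
          fun ω => A.indicator (φ (sn n)) ω + Aᶜ.indicator (φ θl) ω := by
        filter_upwards [hφ.2 (σ n) (sn n) (hσ n) (hsnQ n).1,
          hφ.2 (σ n) θl (hσ n) hθl] with ω u1 u2
        by_cases hω : ω ∈ A
        · rw [Set.indicator_of_mem hω, Set.indicator_of_notMem (by simpa using hω)]
          rw [u1 (by rw [hσdef]; simp only [Set.piecewise_eq_of_mem _ _ _ hω])]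
          ring
        · rw [Set.indicator_of_notMem hω, Set.indicator_of_mem (by simpa using hω)]
          rw [u2 (by rw [hσdef]; simp only [Set.piecewise_eq_of_notMem _ _ _ hω])]
          ring
      rw [integral_congr_ae hae, integral_add
        ((phi_int hφ hZ hZint (hsnQ n).1).indicator hA0)
        ((phi_int hφ hZ hZint hθl).indicator hA0.compl),
        integral_indicator hA0, integral_indicator hA0.compl]
    have hdecθ : ∫ ω, φ θl ω ∂μ = ∫ ω in A, φ θl ω ∂μ + ∫ ω in Aᶜ, φ θl ω ∂μ :=
      (integral_add_compl hA0 (phi_int hφ hZ hZint hθl)).symm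
    have hφA : Filter.Tendsto (fun n => ∫ ω in A, φ (sn n) ω ∂μ) Filter.atTop
        (nhds (∫ ω in A, φ θl ω ∂μ)) := by
      have h2 := hrce.sub (tendsto_const_nhds (x := ∫ ω in Aᶜ, φ θl ω ∂μ))
      have h3 : (fun n => ∫ ω, φ (σ n) ω ∂μ - ∫ ω in Aᶜ, φ θl ω ∂μ) =
          fun n => ∫ ω in A, φ (sn n) ω ∂μ := by
        funext n
        rw [hdecn n]
        ring
      rw [h3] at h2
      have h4 : ∫ ω, φ θl ω ∂μ - ∫ ω in Aᶜ, φ θl ω ∂μ = ∫ ω in A, φ θl ω ∂μ := by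
        rw [hdecθ]; ring
      rwa [h4] at h2
    have hdecVn : ∀ n, ∫ ω, V (σ n) ω ∂μ =
        ∫ ω in A, V (sn n) ω ∂μ + ∫ ω in Aᶜ, V θl ω ∂μ := by
      intro n
      have hae : V (σ n) =ᵐ[μ]
          fun ω => A.indicator (V (sn n)) ω + Aᶜ.indicator (V θl) ω := by
        filter_upwards [V_eq_on_eq hFnull hφ hZ hZint hV (hσ n) (hsnQ n).1,
          V_eq_on_eq hFnull hφ hZ hZint hV (hσ n) hθl] with ω u1 u2
        by_cases hω : ω ∈ A
        · rw [Set.indicator_of_mem hω, Set.indicator_of_notMem (by simpa using hω)]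
          rw [u1 (by rw [hσdef]; simp only [Set.piecewise_eq_of_mem _ _ _ hω])]
          ring
        · rw [Set.indicator_of_notMem hω, Set.indicator_of_mem (by simpa using hω)]
          rw [u2 (by rw [hσdef]; simp only [Set.piecewise_eq_of_notMem _ _ _ hω])]
          ring
      rw [integral_congr_ae hae, integral_add
        ((V_int hφ hZ hZint (hsnQ n).1 (hV _ (hsnQ n).1)).indicator hA0)
        ((V_int hφ hZ hZint hθl (hV _ hθl)).indicator hA0.compl),
        integral_indicator hA0, integral_indicator hA0.compl]
    have hdecVθ : ∫ ω, V θl ω ∂μ = ∫ ω in A, V θl ω ∂μ + ∫ ω in Aᶜ, V θl ω ∂μ :=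
      (integral_add_compl hA0 (V_int hφ hZ hZint hθl (hV _ hθl))).symm
    have hVA : Filter.Tendsto (fun n => ∫ ω in A, V (sn n) ω ∂μ) Filter.atTop
        (nhds (∫ ω in A, V θl ω ∂μ)) := by
      have h2 := hVrce.sub (tendsto_const_nhds (x := ∫ ω in Aᶜ, V θl ω ∂μ))
      have h3 : (fun n => ∫ ω, V (σ n) ω ∂μ - ∫ ω in Aᶜ, V θl ω ∂μ) =
          fun n => ∫ ω in A, V (sn n) ω ∂μ := by
        funext n
        rw [hdecVn n]
        ring
      rw [h3] at h2
      have h4 : ∫ ω, V θl ω ∂μ - ∫ ω in Aᶜ, V θl ω ∂μ = ∫ ω in A, V θl ω ∂μ := by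
        rw [hdecVθ]; ring
      rwa [h4] at h2
    have hn : ∀ n, lam * ∫ ω in A, V (sn n) ω ∂μ ≤ ∫ ω in A, φ (sn n) ω ∂μ := by
      intro n
      have h1 : ∫ ω in A, (lam * V (sn n) ω) ∂μ ≤ ∫ ω in A, φ (sn n) ω ∂μ :=
        integral_mono_ae
          ((V_int hφ hZ hZint (hsnQ n).1 (hV _ (hsnQ n).1)).const_mul lam).restrict
          (phi_int hφ hZ hZint (hsnQ n).1).restrict
          (ae_restrict_of_ae (hsnQ n).2.2)
      rwa [integral_const_mul] at h1
    have hlim : lam * ∫ ω in A, V θl ω ∂μ ≤ ∫ ω in A, φ θl ω ∂μ :=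
      le_of_tendsto_of_tendsto' (hVA.const_mul lam) hφA hn
    rwa [integral_const_mul]
  obtain ⟨vθ, hvθm, hvθe⟩ := V_meas_version hφ hZ hZint hθl (hV _ hθl)
  have hmemb : (fun ω => lam * V θl ω) ≤ᵐ[μ] φ θl := by
    refine ae_le_of_forall_setIntegral_le_subalg' hθl.1.measurableSpace_le
      ((V_int hφ hZ hZint hθl (hV _ hθl)).const_mul lam) (phi_int hφ hZ hZint hθl)
      ⟨fun ω => lam * vθ ω, hvθm.const_mul lam, ?_⟩
      ⟨φ θl, phi_sm hφ hθl, Filter.EventuallyEq.rfl⟩ key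
    filter_upwards [hvθe] with ω h
    rw [h]
  exact ⟨θl, hθl, hSθl, hmemb, fun η h1 h2 h3 => hinf η ⟨h1, h2, h3⟩⟩

end ThetaLambda
section Martingale

variable {m0 : MeasurableSpace Ω} {μ : Measure Ω} {𝓕 : Filtration ℝ m0} {T : ℝ}
  {φ : (Ω → ℝ) → Ω → ℝ} {Z : Ω → ℝ} {V : (Ω → ℝ) → Ω → ℝ}

lemma measurableSpace_le_of_ae_le [IsProbabilityMeasure μ]
    (hFnull : ∀ A : Set Ω, μ A = 0 → MeasurableSet[𝓕 0] A)
    {τ σ : Ω → ℝ} (hτ : MemT0 𝓕 T τ) (hσ : MemT0 𝓕 T σ) (h : τ ≤ᵐ[μ] σ) :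
    hτ.1.measurableSpace ≤ hσ.1.measurableSpace := by
  have hmax : MemT0 𝓕 T (fun ω => max (σ ω) (τ ω)) := hσ.max hτ
  have heq : (fun ω => max (σ ω) (τ ω)) =ᵐ[μ] σ := by
    filter_upwards [h] with ω hh using max_eq_left hh
  have h1 : hτ.1.measurableSpace ≤ hmax.1.measurableSpace :=
    IsStoppingTime.measurableSpace_mono hτ.1 hmax.1 fun ω => WithTop.coe_le_coe.2 (le_max_right _ _)
  rwa [stoppingTime_measurableSpace_congr_ae hFnull hmax hσ heq] at h1

/-- the key martingale property : `V S ≤ E[V (θ^λ(S)) | F_S]` for `λ < 1`. -/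
lemma V_le_condexp_theta_lambda [IsProbabilityMeasure μ] (hT : 0 ≤ T)
    (hFright : ∀ t : ℝ, 𝓕 t = ⨅ s ∈ Set.Ioi t, 𝓕 s)
    (hFnull : ∀ A : Set Ω, μ A = 0 → MeasurableSet[𝓕 0] A)
    (hφ : Admissible 𝓕 T μ φ) (hZ : IsEssSupFam μ (MemT0 𝓕 T) φ Z) (hZint : Integrable Z μ)
    (hφrc : RCE 𝓕 T μ φ)
    (hV : ∀ S (hS : MemT0 𝓕 T S),
      IsEssSupFam μ (fun θ => MemT0 𝓕 T θ ∧ S ≤ᵐ[μ] θ)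
        (fun θ => μ[φ θ | hS.1.measurableSpace]) (V S))
    {S : Ω → ℝ} (hS : MemT0 𝓕 T S) {lam : ℝ} (hlam0 : 0 ≤ lam) (hlam1 : lam < 1)
    {θl : Ω → ℝ} (hθl : MemT0 𝓕 T θl) (hSθl : S ≤ᵐ[μ] θl)
    (hminl : ∀ η, MemT0 𝓕 T η → S ≤ᵐ[μ] η → (∀ᵐ ω ∂μ, lam * V η ω ≤ φ η ω) → θl ≤ᵐ[μ] η) :
    V S ≤ᵐ[μ] μ[V θl | hS.1.measurableSpace] := by
  classical
  -- main step : for every member τ of the family at S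
  have main : ∀ τ, MemT0 𝓕 T τ → S ≤ᵐ[μ] τ →
      μ[φ τ|hS.1.measurableSpace] ≤ᵐ[μ]
        fun ω => lam * V S ω + (1 - lam) * (μ[V θl|hS.1.measurableSpace]) ω := by
    intro τ hτ hSτ
    -- the penalized time at τ
    obtain ⟨θlτ, hθlτ, hτθlτ, hpenτ, hminτ⟩ :=
      exists_theta_lambda hT hFright hFnull hφ hZ hZint hφrc hV hτ hlam0 hlam1.le
    set ϑ : Ω → ℝ := fun ω => max (θlτ ω) (τ ω) with hϑdef
    have hϑ : MemT0 𝓕 T ϑ := hθlτ.max hτ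
    have hϑe : ϑ =ᵐ[μ] θlτ := by
      filter_upwards [hτθlτ] with ω h using max_eq_left h
    have hVϑe : V ϑ =ᵐ[μ] V θlτ := V_congr_ae hFnull hV hϑ hθlτ hϑe
    have hτϑ : ∀ ω, τ ω ≤ ϑ ω := fun ω => le_max_right _ _
    have hpenϑ : ∀ᵐ ω ∂μ, lam * V ϑ ω ≤ φ ϑ ω := by
      filter_upwards [hpenτ, hVϑe, hφ.2 ϑ θlτ hϑ hθlτ, hϑe] with ω h1 h2 h3 h4
      rw [h2, h3 h4]
      exact h1
    have hminϑ : ∀ η, MemT0 𝓕 T η → τ ≤ᵐ[μ] η →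
        (∀ᵐ ω ∂μ, lam * V η ω ≤ φ η ω) → ϑ ≤ᵐ[μ] η := by
      intro η h1 h2 h3
      have := hminτ η h1 h2 h3
      filter_upwards [this, hϑe] with ω a b
      rw [b]; exact a
    -- V τ measurable version
    obtain ⟨vτ, hvτm, hvτe⟩ := V_meas_version hφ hZ hZint hτ (hV τ hτ)
    -- the set where the penalized time has already started
    set B : Set Ω := {ω | ϑ ω ≤ τ ω} with hBdef
    have hBτ : MeasurableSet[hτ.1.measurableSpace] B := by
      rw [hBdef]
      have := IsStoppingTime.measurableSet_stopping_time_le hϑ.1 hτ.1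
      simpa only [WithTop.coe_le_coe] using this
    have hBeq : ∀ ω, ω ∈ B → ϑ ω = τ ω := fun ω h => le_antisymm h (hτϑ ω)
    -- indicator computation on B
    have i1 : B.indicator (V ϑ) =ᵐ[μ] B.indicator (V τ) := by
      filter_upwards [V_eq_on_eq hFnull hφ hZ hZint hV hϑ hτ] with ω h
      by_cases hω : ω ∈ B
      · rw [Set.indicator_of_mem hω, Set.indicator_of_mem hω, h (hBeq ω hω)]
      · rw [Set.indicator_of_notMem hω, Set.indicator_of_notMem hω]
    have hVϑint : Integrable (V ϑ) μ := V_int hφ hZ hZint hϑ (hV _ hϑ)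
    have hVτint : Integrable (V τ) μ := V_int hφ hZ hZint hτ (hV _ hτ)
    have i2 : B.indicator (μ[V ϑ|hτ.1.measurableSpace]) =ᵐ[μ]
        B.indicator (μ[V τ|hτ.1.measurableSpace]) := by
      calc B.indicator (μ[V ϑ|hτ.1.measurableSpace])
          =ᵐ[μ] μ[B.indicator (V ϑ)|hτ.1.measurableSpace] :=
            (condExp_indicator hVϑint hBτ).symm
        _ =ᵐ[μ] μ[B.indicator (V τ)|hτ.1.measurableSpace] := condExp_congr_ae i1
        _ =ᵐ[μ] B.indicator (μ[V τ|hτ.1.measurableSpace]) := condExp_indicator hVτint hBτ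
    have i3 : μ[V τ|hτ.1.measurableSpace] =ᵐ[μ] V τ := by
      have h := condExp_congr_ae (μ := μ) (m := hτ.1.measurableSpace) hvτe
      rw [condExp_of_stronglyMeasurable hτ.1.measurableSpace_le hvτm
        (hVτint.congr hvτe)] at h
      exact h.trans hvτe.symm
    -- the strict inequality off B
    set C : Set Ω := {ω | lam * vτ ω ≤ φ τ ω} with hCdef
    have hCτ : MeasurableSet[hτ.1.measurableSpace] C :=
      measurableSet_le (hvτm.measurable.const_mul lam) (hφ.1 τ hτ).1
    set ν : Ω → ℝ := C.piecewise τ ϑ with hνdef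
    have hν : MemT0 𝓕 T ν :=
      memT0_piecewise hτ hτ hϑ hCτ (fun ω => le_rfl) hτϑ
    have hτν : ∀ ω, τ ω ≤ ν ω := by
      intro ω
      by_cases hω : ω ∈ C
      · rw [hνdef]; simp only [Set.piecewise_eq_of_mem _ _ _ hω]; exact le_rfl
      · rw [hνdef]; simp only [Set.piecewise_eq_of_notMem _ _ _ hω]; exact hτϑ ω
    have hpenν : ∀ᵐ ω ∂μ, lam * V ν ω ≤ φ ν ω := by
      filter_upwards [V_eq_on_eq hFnull hφ hZ hZint hV hν hτ,
        V_eq_on_eq hFnull hφ hZ hZint hV hν hϑ, hφ.2 ν τ hν hτ, hφ.2 ν ϑ hν hϑ,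
        hvτe, hpenϑ] with ω e1 e2 p1 p2 hv hp
      by_cases hω : ω ∈ C
      · have hνω : ν ω = τ ω := by rw [hνdef]; simp [Set.piecewise_eq_of_mem _ _ _ hω]
        rw [e1 hνω, p1 hνω]
        have : lam * vτ ω ≤ φ τ ω := hω
        rwa [← hv] at this
      · have hνω : ν ω = ϑ ω := by rw [hνdef]; simp [Set.piecewise_eq_of_notMem _ _ _ hω]
        rw [e2 hνω, p2 hνω]
        exact hp
    have hϑν : ϑ ≤ᵐ[μ] ν :=
      hminϑ ν hν (Filter.Eventually.of_forall hτν) hpenν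
    have hCBnull : μ (C ∩ Bᶜ) = 0 := by
      have hsub : C ∩ Bᶜ ⊆ {ω | ¬ ϑ ω ≤ ν ω} := by
        rintro ω ⟨hC, hB⟩
        have hνω : ν ω = τ ω := by rw [hνdef]; simp [Set.piecewise_eq_of_mem _ _ _ hC]
        simp only [Set.mem_setOf_eq, hνω]
        exact hB
      exact measure_mono_null hsub hϑν
    have hCBae : ∀ᵐ ω ∂μ, ω ∉ C ∩ Bᶜ := measure_eq_zero_iff_ae_notMem.mp hCBnull
    -- conclusion of step (i)
    set E : Ω → ℝ := μ[V ϑ|hτ.1.measurableSpace] with hEdef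
    have step1 : φ τ ≤ᵐ[μ] fun ω => lam * V τ ω + (1 - lam) * E ω := by
      have hnnE : (0 : Ω → ℝ) ≤ᵐ[μ] E := by
        rw [hEdef]
        exact condExp_nonneg (V_nonneg hφ hZ hZint hϑ (hV _ hϑ))
      filter_upwards [i2, i3, hCBae, V_ge_phi hφ hZ hZint hτ (hV τ hτ),
        hnnE, hvτe] with ω h2 h3 hc hge hnn hv
      have hnn' : 0 ≤ E ω := hnn
      have hfac : (0:ℝ) ≤ 1 - lam := by linarith
      by_cases hω : ω ∈ B
      · have e : E ω = V τ ω := by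
          have h2' := h2
          rw [Set.indicator_of_mem hω, Set.indicator_of_mem hω] at h2'
          rw [hEdef] at *
          rw [h2', h3]
        rw [e]
        have : lam * V τ ω + (1 - lam) * V τ ω = V τ ω := by ring
        linarith
      · have hnc : ω ∉ C := fun hC => hc ⟨hC, hω⟩
        have hlt : φ τ ω < lam * vτ ω := not_le.mp hnc
        rw [← hv] at hlt
        have := mul_nonneg hfac hnn'
        linarith
    -- step (ii) : condition on F_S
    have hmS : hS.1.measurableSpace ≤ m0 := hS.1.measurableSpace_le
    have hmSτ : hS.1.measurableSpace ≤ hτ.1.measurableSpace :=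
      measurableSpace_le_of_ae_le hFnull hS hτ hSτ
    have hmSθl : hS.1.measurableSpace ≤ hθl.1.measurableSpace :=
      measurableSpace_le_of_ae_le hFnull hS hθl hSθl
    have hEint : Integrable E μ := by rw [hEdef]; exact integrable_condExp
    have hRHSi : Integrable (fun ω => lam * V τ ω + (1 - lam) * E ω) μ :=
      (hVτint.const_mul lam).add (hEint.const_mul (1 - lam))
    have c0 : μ[φ τ|hS.1.measurableSpace] ≤ᵐ[μ]
        μ[fun ω => lam * V τ ω + (1 - lam) * E ω|hS.1.measurableSpace] :=
      condExp_mono (phi_int hφ hZ hZint hτ) hRHSi step1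
    have hsmul : (fun ω => lam * V τ ω + (1 - lam) * E ω) =
        lam • V τ + (1 - lam) • E := by
      funext ω
      simp [Pi.add_apply, Pi.smul_apply, smul_eq_mul]
    have c1 : μ[fun ω => lam * V τ ω + (1 - lam) * E ω|hS.1.measurableSpace] =ᵐ[μ]
        lam • μ[V τ|hS.1.measurableSpace] + (1 - lam) • μ[E|hS.1.measurableSpace] := by
      rw [hsmul]
      calc μ[lam • V τ + (1 - lam) • E|hS.1.measurableSpace]
          =ᵐ[μ] μ[lam • V τ|hS.1.measurableSpace] +
            μ[(1 - lam) • E|hS.1.measurableSpace] :=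
            condExp_add (hVτint.smul lam) (hEint.smul (1 - lam)) _
        _ =ᵐ[μ] lam • μ[V τ|hS.1.measurableSpace] +
            (1 - lam) • μ[E|hS.1.measurableSpace] := by
            filter_upwards [condExp_smul (μ := μ) (m := hS.1.measurableSpace) lam (V τ),
              condExp_smul (μ := μ) (m := hS.1.measurableSpace) (1 - lam) E] with ω e1 e2
            rw [Pi.add_apply, Pi.add_apply, e1, e2]
    have c2 : μ[E|hS.1.measurableSpace] =ᵐ[μ] μ[V ϑ|hS.1.measurableSpace] := by
      rw [hEdef]
      exact condExp_condExp_of_le hmSτ hτ.1.measurableSpace_le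
    have c3 : μ[V ϑ|hS.1.measurableSpace] ≤ᵐ[μ] μ[V θl|hS.1.measurableSpace] := by
      have hθlϑ : θl ≤ᵐ[μ] ϑ := by
        have := hminl θlτ hθlτ (hSτ.trans hτθlτ) hpenτ
        filter_upwards [this, hϑe] with ω a b
        rw [b]; exact a
      have t2 : μ[V ϑ|hθl.1.measurableSpace] ≤ᵐ[μ] V θl :=
        V_superm hFnull hφ hZ hZint hV hθl hϑ hθlϑ
      have t3 : μ[μ[V ϑ|hθl.1.measurableSpace]|hS.1.measurableSpace] ≤ᵐ[μ]
          μ[V θl|hS.1.measurableSpace] :=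
        condExp_mono integrable_condExp (V_int hφ hZ hZint hθl (hV _ hθl)) t2
      have t1 := (condExp_condExp_of_le hmSθl hθl.1.measurableSpace_le
        (μ := μ) (f := V ϑ)).symm
      exact t1.le.trans t3
    have c4 : μ[V τ|hS.1.measurableSpace] ≤ᵐ[μ] V S :=
      V_superm hFnull hφ hZ hZint hV hS hτ hSτ
    filter_upwards [c0, c1, c2, c3, c4] with ω h0 h1 h2 h3 h4
    rw [h1] at h0
    simp only [Pi.add_apply, Pi.smul_apply, smul_eq_mul] at h0
    rw [h2] at h0
    have hfac : (0:ℝ) ≤ 1 - lam := by linarith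
    have b1 := mul_le_mul_of_nonneg_left h4 hlam0
    have b2 := mul_le_mul_of_nonneg_left h3 hfac
    linarith
  -- minimality of V S
  have hfinal : V S ≤ᵐ[μ]
      fun ω => lam * V S ω + (1 - lam) * (μ[V θl|hS.1.measurableSpace]) ω := by
    refine (hV S hS).2 _ fun τ hτ => ?_
    exact main τ hτ.1 hτ.2
  filter_upwards [hfinal] with ω h
  have : (1 - lam) * V S ω ≤ (1 - lam) * (μ[V θl|hS.1.measurableSpace]) ω := by linarith
  have hpos : (0:ℝ) < 1 - lam := by linarith
  exact le_of_mul_le_mul_left this hpos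

end Martingale
/-- (Theorem 1.2) If the admissible family `φ` is right and left
continuous along stopping times in expectation with `E[ess sup φ] < ∞`, then for
every `S ∈ T_0` the stopping time `θ*(S) = ess inf {θ ∈ T_S : v(θ) = φ(θ) a.s.}`
is optimal for `v(S)`: `v(S) = E[φ(θ*(S)) | F_S]` a.s. -/
theorem optimal_one_stopping_time
    {m0 : MeasurableSpace Ω} (μ : Measure Ω) [IsProbabilityMeasure μ]
    (𝓕 : Filtration ℝ m0) (T : ℝ) (hT : 0 ≤ T)
    (hFright : ∀ t : ℝ, 𝓕 t = ⨅ s ∈ Set.Ioi t, 𝓕 s)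
    (hFnull : ∀ A : Set Ω, μ A = 0 → MeasurableSet[𝓕 0] A)
    (φ : (Ω → ℝ) → Ω → ℝ)
    (hφ : Admissible 𝓕 T μ φ)
    (Z : Ω → ℝ) (hZ : IsEssSupFam μ (MemT0 𝓕 T) φ Z) (hZint : Integrable Z μ)
    (hφrc : RCE 𝓕 T μ φ) (hφlc : LCE 𝓕 T μ φ)
    (V : (Ω → ℝ) → Ω → ℝ)
    (hV : ∀ S (hS : MemT0 𝓕 T S),
      IsEssSupFam μ (fun θ => MemT0 𝓕 T θ ∧ S ≤ᵐ[μ] θ)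
        (fun θ => μ[φ θ | hS.1.measurableSpace]) (V S)) :
    ∀ S (hS : MemT0 𝓕 T S) (θstar : Ω → ℝ),
      MemT0 𝓕 T θstar → S ≤ᵐ[μ] θstar →
      IsEssInfFam μ (fun θ => MemT0 𝓕 T θ ∧ S ≤ᵐ[μ] θ ∧ V θ =ᵐ[μ] φ θ)
        (fun θ => θ) θstar →
      V S =ᵐ[μ] μ[φ θstar | hS.1.measurableSpace] := by
  classical
  intro S hS θstar hθstar hSθstar hinf
  -- the sequence of penalization parameters
  set lam : ℕ → ℝ := fun k => 1 - 1/(k+2) with hlamdef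
  have hlam0 : ∀ k, 0 ≤ lam k := by
    intro k
    have h1 : (1:ℝ)/(k+2) ≤ 1 := by
      rw [div_le_one (by positivity)]
      have : (0:ℝ) ≤ (k:ℝ) := Nat.cast_nonneg k
      linarith
    simp only [hlamdef]
    linarith
  have hlamlt : ∀ k, lam k < 1 := by
    intro k
    have h1 : (0:ℝ) < 1/(k+2) := by positivity
    simp only [hlamdef]
    linarith
  have hlammono : ∀ k, lam k ≤ lam (k+1) := by
    intro k
    have h1 : (1:ℝ)/(k+1+2) ≤ 1/(k+2) := by
      apply one_div_le_one_div_of_le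
      · positivity
      · push_cast; linarith
    simp only [hlamdef]
    push_cast
    linarith
  have hlamtends : Filter.Tendsto lam Filter.atTop (nhds 1) := by
    rw [hlamdef]
    have h1 : Filter.Tendsto (fun k : ℕ => ((k:ℝ)+2)) Filter.atTop Filter.atTop := by
      apply Filter.tendsto_atTop_add_const_right
      exact tendsto_natCast_atTop_atTop
    have h0 : Filter.Tendsto (fun k : ℕ => ((k:ℝ)+2)⁻¹) Filter.atTop (nhds 0) :=
      h1.inv_tendsto_atTop
    have h2 := (tendsto_const_nhds (x := (1:ℝ))).sub h0
    rw [sub_zero] at h2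
    simp only [one_div]
    exact h2
  -- the penalized stopping times
  have H : ∀ k : ℕ, ∃ θl : Ω → ℝ, MemT0 𝓕 T θl ∧ (S ≤ᵐ[μ] θl) ∧
      (∀ᵐ ω ∂μ, lam k * V θl ω ≤ φ θl ω) ∧
      (∀ η, MemT0 𝓕 T η → S ≤ᵐ[μ] η → (∀ᵐ ω ∂μ, lam k * V η ω ≤ φ η ω) → θl ≤ᵐ[μ] η) :=
    fun k => exists_theta_lambda hT hFright hFnull hφ hZ hZint hφrc hV hS
      (hlam0 k) (hlamlt k).le
  choose θk hθk hSθk hpenk hmink using H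
  -- monotonicity in k
  have hmono : ∀ k, θk k ≤ᵐ[μ] θk (k+1) := by
    intro k
    refine hmink k _ (hθk (k+1)) (hSθk (k+1)) ?_
    filter_upwards [hpenk (k+1), V_nonneg hφ hZ hZint (hθk (k+1)) (hV _ (hθk (k+1)))]
      with ω h1 h2
    calc lam k * V (θk (k+1)) ω ≤ lam (k+1) * V (θk (k+1)) ω :=
          mul_le_mul_of_nonneg_right (hlammono k) h2
      _ ≤ φ (θk (k+1)) ω := h1
  -- each θk is below θstar
  have hθk_star : ∀ k, θk k ≤ᵐ[μ] θstar := by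
    intro k
    refine hinf.2 (θk k) fun η hη => ?_
    refine hmink k η hη.1 hη.2.1 ?_
    filter_upwards [hη.2.2, V_nonneg hφ hZ hZint hη.1 (hV _ hη.1)] with ω h1 h2
    calc lam k * V η ω ≤ 1 * V η ω := mul_le_mul_of_nonneg_right (hlamlt k).le h2
      _ = V η ω := one_mul _
      _ = φ η ω := h1
  -- a pointwise monotone modification
  set θ' : ℕ → Ω → ℝ := fun k => Nat.rec (θk 0)
    (fun k p => fun ω => max (p ω) (θk (k+1) ω)) k with hθ'def
  have hθ'succ : ∀ k, θ' (k+1) = fun ω => max (θ' k ω) (θk (k+1) ω) := fun k => rfl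
  have hθ'mem : ∀ k, MemT0 𝓕 T (θ' k) := by
    intro k
    induction k with
    | zero => exact hθk 0
    | succ k ih => exact ih.max (hθk (k+1))
  have hθ'e : ∀ k, θ' k =ᵐ[μ] θk k := by
    intro k
    induction k with
    | zero => exact Filter.EventuallyEq.rfl
    | succ k ih =>
      rw [hθ'succ]
      filter_upwards [ih, hmono k] with ω h1 h2
      show max (θ' k ω) (θk (k+1) ω) = θk (k+1) ω
      rw [h1]
      exact max_eq_right h2
  have hθ'mono : ∀ k ω, θ' k ω ≤ θ' (k+1) ω := fun k ω => le_max_left _ _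
  set θhat : Ω → ℝ := fun ω => ⨆ k, θ' k ω with hθhatdef
  have hθhat : MemT0 𝓕 T θhat := memT0_iSup_seq hθ'mem
  have hbdd : ∀ ω, BddAbove (Set.range fun k => θ' k ω) := by
    intro ω
    exact ⟨T, by rintro x ⟨k, rfl⟩; exact (hθ'mem k).le_T ω⟩
  have hup : UpAS μ θ' θhat := by
    refine Filter.Eventually.of_forall fun ω => ⟨fun k => hθ'mono k ω, ?_⟩
    exact tendsto_atTop_ciSup (monotone_nat_of_le_succ fun k => hθ'mono k ω) (hbdd ω)
  have hle_hat : ∀ k ω, θ' k ω ≤ θhat ω := fun k ω => le_ciSup (hbdd ω) k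
  have hSθhat : S ≤ᵐ[μ] θhat := by
    filter_upwards [hSθk 0] with ω h
    exact le_trans h (hle_hat 0 ω)
  -- left continuity in expectation of φ along θ' ↑ θhat
  have hlce := hφlc θhat hθhat θ' hθ'mem hup
  -- V S = E[V(θk k)|F_S] in expectation
  have hVSk : ∀ k, ∫ ω, V S ω ∂μ = ∫ ω, V (θ' k) ω ∂μ := by
    intro k
    have hVle := V_le_condexp_theta_lambda hT hFright hFnull hφ hZ hZint hφrc hV hS
      (hlam0 k) (hlamlt k) (hθk k) (hSθk k) (hmink k)
    have hVge := V_superm hFnull hφ hZ hZint hV hS (hθk k) (hSθk k)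
    have heqk : V S =ᵐ[μ] μ[V (θk k)|hS.1.measurableSpace] := hVle.antisymm hVge
    have e1 : ∫ ω, V S ω ∂μ = ∫ ω, V (θk k) ω ∂μ := by
      rw [integral_congr_ae heqk]
      exact integral_condExp hS.1.measurableSpace_le
    have e2 : ∫ ω, V (θ' k) ω ∂μ = ∫ ω, V (θk k) ω ∂μ :=
      integral_congr_ae (V_congr_ae hFnull hV (hθ'mem k) (hθk k) (hθ'e k))
    rw [e1, e2]
  -- λ_k ∫ V S ≤ ∫ φ(θ' k)
  have hpen' : ∀ k, ∀ᵐ ω ∂μ, lam k * V (θ' k) ω ≤ φ (θ' k) ω := by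
    intro k
    filter_upwards [hpenk k, V_eq_on_eq hFnull hφ hZ hZint hV (hθ'mem k) (hθk k),
      hφ.2 (θ' k) (θk k) (hθ'mem k) (hθk k), hθ'e k] with ω h1 h2 h3 h4
    rw [h2 h4, h3 h4]
    exact h1
  have hkey : ∀ k, lam k * ∫ ω, V S ω ∂μ ≤ ∫ ω, φ (θ' k) ω ∂μ := by
    intro k
    have h1 : ∫ ω, (lam k * V (θ' k) ω) ∂μ ≤ ∫ ω, φ (θ' k) ω ∂μ :=
      integral_mono_ae
        ((V_int hφ hZ hZint (hθ'mem k) (hV _ (hθ'mem k))).const_mul (lam k))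
        (phi_int hφ hZ hZint (hθ'mem k)) (hpen' k)
    rw [integral_const_mul] at h1
    rw [hVSk k]
    exact h1
  have hlim1 : Filter.Tendsto (fun k => lam k * ∫ ω, V S ω ∂μ) Filter.atTop
      (nhds (∫ ω, V S ω ∂μ)) := by
    have h := hlamtends.mul_const (∫ ω, V S ω ∂μ)
    rwa [one_mul] at h
  have hVS_le : ∫ ω, V S ω ∂μ ≤ ∫ ω, φ θhat ω ∂μ :=
    le_of_tendsto_of_tendsto' hlim1 hlce hkey
  -- V θhat = φ θhat a.e.
  have hφV : φ θhat ≤ᵐ[μ] V θhat := V_ge_phi hφ hZ hZint hθhat (hV _ hθhat)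
  have hintV : ∫ ω, V θhat ω ∂μ ≤ ∫ ω, V S ω ∂μ :=
    int_V_mono hFnull hφ hZ hZint hV hS hθhat hSθhat
  have hVφhat : φ θhat =ᵐ[μ] V θhat :=
    ae_eq_of_ae_le_of_integral_ge (phi_int hφ hZ hZint hθhat)
      (V_int hφ hZ hZint hθhat (hV _ hθhat)) hφV (le_trans hintV hVS_le)
  -- identification of θhat with θstar
  have hstarle : θstar ≤ᵐ[μ] θhat := hinf.1 θhat ⟨hθhat, hSθhat, hVφhat.symm⟩
  have hhatle : θhat ≤ᵐ[μ] θstar := by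
    have hall : ∀ᵐ ω ∂μ, ∀ k, θ' k ω ≤ θstar ω := by
      refine ae_all_iff.mpr fun k => ?_
      filter_upwards [hθ'e k, hθk_star k] with ω h1 h2
      rw [h1]; exact h2
    filter_upwards [hall] with ω h
    exact ciSup_le fun k => h k
  have heqstar : θhat =ᵐ[μ] θstar := hhatle.antisymm hstarle
  -- conclusion
  have hφeq : φ θhat =ᵐ[μ] φ θstar := by
    filter_upwards [hφ.2 θhat θstar hθhat hθstar, heqstar] with ω h1 h2 using h1 h2
  have hcondle : μ[φ θhat|hS.1.measurableSpace] ≤ᵐ[μ] V S := by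
    have e1 : μ[φ θhat|hS.1.measurableSpace] =ᵐ[μ] μ[V θhat|hS.1.measurableSpace] :=
      condExp_congr_ae hVφhat
    exact e1.le.trans (V_superm hFnull hφ hZ hZint hV hS hθhat hSθhat)
  have hfinal : μ[φ θhat|hS.1.measurableSpace] =ᵐ[μ] V S := by
    refine ae_eq_of_ae_le_of_integral_ge integrable_condExp
      (V_int hφ hZ hZint hS (hV S hS)) hcondle ?_
    rw [integral_condExp hS.1.measurableSpace_le]
    exact hVS_le
  exact hfinal.symm.trans (condExp_congr_ae hφeq)
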